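/- arXiv:0912.5389 — 8 statements merged into one kernel-verified Lean document; each statement's English description precedes it below -/
import Mathlib

section
/- For any separable Banach space X, the set L_pb(X) of power-bounded operators on X is a Borel set in L(X) equipped with the σ-algebra σ(S_op) generated by the strong operator topology. -/
open Filter Topology

/-- The `n`-th Cesàro mean `A_n = (1/n) ∑_{k<n} T^k` of an operator `T`. -/
noncomputable def cesaroMean {X : Type*} [NormedAddCommGroup X] [NormedSpace ℝ X]
    (T : X →L[ℝ] X) (n : ℕ) : X →L[ℝ] X :=
  (n : ℝ)⁻¹ • ∑ k ∈ Finset.range n, T ^ k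

/-- The strong operator topology on `L(X)`: the topology of pointwise convergence,
induced from the product topology on `X → X`. -/
def sot (X : Type*) [NormedAddCommGroup X] [NormedSpace ℝ X] : TopologicalSpace (X →L[ℝ] X) :=
  TopologicalSpace.induced (fun T => (T : X → X)) Pi.topologicalSpace

/-- `T` is Cesàro-bounded if the norms of its Cesàro means are uniformly bounded. -/
def CesaroBounded {X : Type*} [NormedAddCommGroup X] [NormedSpace ℝ X]
    (T : X →L[ℝ] X) : Prop :=
  ∃ M : ℝ, ∀ n : ℕ, ‖cesaroMean T n‖ ≤ M

/-- `T` is ergodic if for every `x` the sequence of Cesàro means at `x` converges in norm. -/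
def IsErgodicOp {X : Type*} [NormedAddCommGroup X] [NormedSpace ℝ X]
    (T : X →L[ℝ] X) : Prop :=
  ∀ x : X, ∃ y : X, Tendsto (fun n => cesaroMean T n x) atTop (𝓝 y)

/-- `T` is uniformly ergodic if the sequence of Cesàro means converges in operator norm. -/
def IsUniformlyErgodicOp {X : Type*} [NormedAddCommGroup X] [NormedSpace ℝ X]
    (T : X →L[ℝ] X) : Prop :=
  ∃ L : X →L[ℝ] X, Tendsto (fun n => cesaroMean T n) atTop (𝓝 L)

/-- Condition (NSE): there are `ε > 0` and a strictly increasing sequence `j` such that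
for every `m` some `x` in the unit ball satisfies `‖A_{j_p} x - A_{j_{p+1}} x‖ > ε`
for all `p ≤ m`. -/
def NSE {X : Type*} [NormedAddCommGroup X] [NormedSpace ℝ X]
    (T : X →L[ℝ] X) : Prop :=
  ∃ ε > (0 : ℝ), ∃ j : ℕ → ℕ, StrictMono j ∧
    ∀ m : ℕ, ∃ x : X, ‖x‖ ≤ 1 ∧
      ∀ p ≤ m, ε < ‖cesaroMean T (j p) x - cesaroMean T (j (p + 1)) x‖

/-- The tree `𝒜_e(T, ε)`: finite strictly increasing sequences `s` of naturals such that
`|s| ≤ 1` or some `x` in the unit ball satisfies `‖A_{s_p} x - A_{s_{p+1}} x‖ > ε`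
for all consecutive pairs of entries of `s`. -/
def ergoTree {X : Type*} [NormedAddCommGroup X] [NormedSpace ℝ X]
    (T : X →L[ℝ] X) (ε : ℝ) : Set (List ℕ) :=
  {s | s.Chain' (· < ·) ∧ (s.length ≤ 1 ∨ ∃ x : X, ‖x‖ ≤ 1 ∧
    ∀ p : ℕ, p + 1 < s.length →
      ε < ‖cesaroMean T (s.getD p 0) x - cesaroMean T (s.getD (p + 1) 0) x‖)}

/-- A tree on `ℕ` (a set of finite sequences) is well-founded if it has no infinite branch. -/
def TreeWF (𝒜 : Set (List ℕ)) : Prop :=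
  ¬ ∃ J : ℕ → ℕ, ∀ m : ℕ, (List.range m).map J ∈ 𝒜

/-- The relation "is a proper extension of", restricted to the nodes of the tree `𝒜`. -/
def treeRel (𝒜 : Set (List ℕ)) : List ℕ → List ℕ → Prop :=
  fun t s => s ∈ 𝒜 ∧ t ∈ 𝒜 ∧ s <+: t ∧ s ≠ t

open Classical in
/-- The height of a well-founded tree: the ordinal rank of the relation
"is a proper extension of" on its nodes, evaluated at the empty sequence
(and `0` by convention if that relation is not well-founded). -/
noncomputable def treeHeight (𝒜 : Set (List ℕ)) : Ordinal :=
  if h : WellFounded (treeRel 𝒜) then (h.apply []).rank else 0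

/-- For a separable Banach space `X`, the set of power-bounded operators is Borel in
`L(X)` with the σ-algebra generated by the strong operator topology. -/
theorem stmt_2 (X : Type*) [NormedAddCommGroup X] [NormedSpace ℝ X] [CompleteSpace X]
    [TopologicalSpace.SeparableSpace X] :
    @MeasurableSet (X →L[ℝ] X) (@borel _ (sot X))
      {T : X →L[ℝ] X | ∃ M : ℝ, ∀ n : ℕ, ‖T ^ n‖ ≤ M} := by
  letI : TopologicalSpace (X →L[ℝ] X) := sot X
  letI : MeasurableSpace (X →L[ℝ] X) := borel _
  haveI : BorelSpace (X →L[ℝ] X) := ⟨rfl⟩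
  have hev : ∀ x : X, Continuous fun T : X →L[ℝ] X => T x := fun x =>
    (continuous_apply x).comp continuous_induced_dom
  have key : ∀ m : ℕ, IsClosed {T : X →L[ℝ] X | ∀ n, ‖T ^ n‖ ≤ (m : ℝ)} := by
    intro m
    rw [isClosed_iff_clusterPt]
    intro a ha
    set F := 𝓝 a ⊓ 𝓟 {T : X →L[ℝ] X | ∀ n, ‖T ^ n‖ ≤ (m : ℝ)} with hFdef
    haveI hFneBot : F.NeBot := ha
    have hFa : F ≤ 𝓝 a := inf_le_left
    have hFs : ∀ᶠ T in F, ∀ n, ‖T ^ n‖ ≤ (m : ℝ) := le_principal_iff.mp inf_le_right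
    have hida : Tendsto (id : (X →L[ℝ] X) → _) F (𝓝 a) := tendsto_id'.mpr hFa
    have hpt : ∀ (x : X) (n : ℕ),
        Tendsto (fun T : X →L[ℝ] X => (T ^ n) x) F (𝓝 ((a ^ n) x)) := by
      intro x n
      induction n with
      | zero => simpa using tendsto_const_nhds
      | succ n ih =>
        have h1 : Tendsto (fun T : X →L[ℝ] X => T ((a ^ n) x)) F (𝓝 (a ((a ^ n) x))) :=
          ((hev ((a ^ n) x)).tendsto a).comp hida
        have hnorm : Tendsto (fun T : X →L[ℝ] X => ‖(T ^ n) x - (a ^ n) x‖) F (𝓝 0) := by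
          have := (ih.sub (tendsto_const_nhds (x := (a ^ n) x))).norm
          simpa using this
        have h2 : Tendsto (fun T : X →L[ℝ] X => T ((T ^ n) x - (a ^ n) x)) F (𝓝 0) := by
          apply squeeze_zero_norm' ?_ (by simpa only [mul_zero] using hnorm.const_mul (m : ℝ))
          filter_upwards [hFs] with T hT
          calc ‖T ((T ^ n) x - (a ^ n) x)‖ ≤ ‖T‖ * ‖(T ^ n) x - (a ^ n) x‖ :=
                T.le_opNorm _
            _ ≤ (m : ℝ) * ‖(T ^ n) x - (a ^ n) x‖ := by
                gcongr
                simpa using hT 1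
        have hsum := h2.add h1
        have heq : ∀ T : X →L[ℝ] X,
            T ((T ^ n) x - (a ^ n) x) + T ((a ^ n) x) = (T ^ (n + 1)) x := by
          intro T
          rw [map_sub, sub_add_cancel, pow_succ', ContinuousLinearMap.mul_apply]
        simp only [heq, zero_add] at hsum
        have hae : (a ^ (n + 1)) x = a ((a ^ n) x) := by
          rw [pow_succ', ContinuousLinearMap.mul_apply]
        rw [hae]
        exact hsum
    intro n
    refine ContinuousLinearMap.opNorm_le_bound _ (by positivity) fun x => ?_
    refine le_of_tendsto (hpt x n).norm ?_
    filter_upwards [hFs] with T hT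
    calc ‖(T ^ n) x‖ ≤ ‖T ^ n‖ * ‖x‖ := (T ^ n).le_opNorm x
      _ ≤ (m : ℝ) * ‖x‖ := by gcongr; exact hT n
  have hset : {T : X →L[ℝ] X | ∃ M : ℝ, ∀ n : ℕ, ‖T ^ n‖ ≤ M} =
      ⋃ m : ℕ, {T : X →L[ℝ] X | ∀ n, ‖T ^ n‖ ≤ (m : ℝ)} := by
    ext T
    simp only [Set.mem_setOf_eq, Set.mem_iUnion]
    constructor
    · rintro ⟨M, hM⟩
      obtain ⟨m, hm⟩ := exists_nat_ge M
      exact ⟨m, fun n => (hM n).trans hm⟩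
    · rintro ⟨m, hm⟩
      exact ⟨m, hm⟩
  rw [hset]
  exact MeasurableSet.iUnion fun m => (key m).measurableSet
end

section
/- For any separable Banach space X, the set L_cb(X) of Cesàro-bounded operators on X is a Borel set in L(X) equipped with the σ-algebra σ(S_op) generated by the strong operator topology. -/
open Filter Topology

/-- For a separable Banach space `X`, the set of Cesàro-bounded operators is Borel in
`L(X)` with the σ-algebra generated by the strong operator topology. -/
theorem stmt_3 (X : Type*) [NormedAddCommGroup X] [NormedSpace ℝ X] [CompleteSpace X]
    [TopologicalSpace.SeparableSpace X] :
    @MeasurableSet (X →L[ℝ] X) (@borel _ (sot X))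
      {T : X →L[ℝ] X | CesaroBounded T} := by
  classical
  letI : TopologicalSpace (X →L[ℝ] X) := sot X
  letI : MeasurableSpace (X →L[ℝ] X) := borel (X →L[ℝ] X)
  haveI : BorelSpace (X →L[ℝ] X) := ⟨rfl⟩
  -- evaluation is continuous for the strong operator topology
  have h_eval : ∀ y : X, Continuous fun T : X →L[ℝ] X => T y := by
    intro y
    exact (continuous_apply y).comp continuous_induced_dom
  -- norm balls are SOT-closed
  have h_ball : ∀ r : ℝ, 0 ≤ r → IsClosed {T : X →L[ℝ] X | ‖T‖ ≤ r} := by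
    intro r hr
    have heq : {T : X →L[ℝ] X | ‖T‖ ≤ r} = ⋂ y : X, {T : X →L[ℝ] X | ‖T y‖ ≤ r * ‖y‖} := by
      ext T
      simp only [Set.mem_setOf_eq, Set.mem_iInter]
      constructor
      · intro h y
        exact (T.le_opNorm y).trans (mul_le_mul_of_nonneg_right h (norm_nonneg y))
      · intro h
        exact T.opNorm_le_bound hr h
    rw [heq]
    exact isClosed_iInter fun y =>
      isClosed_le ((h_eval y).norm) continuous_const
  -- powers applied at a point are SOT-continuous on norm balls
  have h_pow : ∀ (r : ℝ) (k : ℕ) (x : X),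
      ContinuousOn (fun T : X →L[ℝ] X => (T ^ k) x) {T : X →L[ℝ] X | ‖T‖ ≤ r} := by
    intro r k x
    induction k with
    | zero =>
      have : (fun T : X →L[ℝ] X => (T ^ 0) x) = fun _ => x := by
        funext T; simp
      rw [this]; exact continuousOn_const
    | succ k ih =>
      intro T₀ hT₀
      have ih' : Tendsto (fun T : X →L[ℝ] X => (T ^ k) x)
          (𝓝[{T : X →L[ℝ] X | ‖T‖ ≤ r}] T₀) (𝓝 ((T₀ ^ k) x)) := ih T₀ hT₀
      have h2 : Tendsto (fun T : X →L[ℝ] X => T ((T₀ ^ k) x))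
          (𝓝[{T : X →L[ℝ] X | ‖T‖ ≤ r}] T₀) (𝓝 (T₀ ((T₀ ^ k) x))) :=
        ((h_eval ((T₀ ^ k) x)).tendsto T₀).mono_left nhdsWithin_le_nhds
      have h1 : Tendsto (fun T : X →L[ℝ] X => T ((T ^ k) x) - T ((T₀ ^ k) x))
          (𝓝[{T : X →L[ℝ] X | ‖T‖ ≤ r}] T₀) (𝓝 0) := by
        have hbound : ∀ T ∈ {T : X →L[ℝ] X | ‖T‖ ≤ r},
            ‖T ((T ^ k) x) - T ((T₀ ^ k) x)‖ ≤ r * ‖(T ^ k) x - (T₀ ^ k) x‖ := by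
          intro T hT
          rw [← map_sub]
          exact (T.le_opNorm _).trans (mul_le_mul_of_nonneg_right hT (norm_nonneg _))
        have hg : Tendsto (fun T : X →L[ℝ] X => r * ‖(T ^ k) x - (T₀ ^ k) x‖)
            (𝓝[{T : X →L[ℝ] X | ‖T‖ ≤ r}] T₀) (𝓝 0) := by
          have := ((ih'.sub (tendsto_const_nhds (x := (T₀ ^ k) x))).norm.const_mul r)
          simpa using this
        exact squeeze_zero_norm' (eventually_nhdsWithin_of_forall hbound) hg
      have hsum := h1.add h2
      rw [zero_add] at hsum
      have heq : (fun T : X →L[ℝ] X =>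
            (T ((T ^ k) x) - T ((T₀ ^ k) x)) + T ((T₀ ^ k) x))
          = fun T : X →L[ℝ] X => (T ^ (k + 1)) x := by
        funext T
        rw [pow_succ', ContinuousLinearMap.mul_apply]
        abel
      rw [heq] at hsum
      have htarget : T₀ ((T₀ ^ k) x) = (T₀ ^ (k + 1)) x := by
        rw [pow_succ', ContinuousLinearMap.mul_apply]
      rw [htarget] at hsum
      exact hsum
  -- Cesàro means applied at a point are SOT-continuous on norm balls
  have h_ces : ∀ (r : ℝ) (n : ℕ) (x : X),
      ContinuousOn (fun T : X →L[ℝ] X => cesaroMean T n x)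
        {T : X →L[ℝ] X | ‖T‖ ≤ r} := by
    intro r n x
    have heq : (fun T : X →L[ℝ] X => cesaroMean T n x)
        = fun T : X →L[ℝ] X => (n : ℝ)⁻¹ • ∑ k ∈ Finset.range n, (T ^ k) x := by
      funext T
      simp [cesaroMean, ContinuousLinearMap.smul_apply, ContinuousLinearMap.sum_apply]
    rw [heq]
    exact (continuousOn_finset_sum _ fun k _ => h_pow r k x).const_smul _
  -- sublevel sets of the Cesàro means at a point are Borel
  have h_set : ∀ (n : ℕ) (x : X) (c : ℝ),
      MeasurableSet {T : X →L[ℝ] X | ‖cesaroMean T n x‖ ≤ c} := by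
    intro n x c
    have heq : {T : X →L[ℝ] X | ‖cesaroMean T n x‖ ≤ c}
        = ⋃ r : ℕ, ({T : X →L[ℝ] X | ‖T‖ ≤ (r : ℝ)} ∩
            ((fun T : X →L[ℝ] X => cesaroMean T n x) ⁻¹' {y : X | ‖y‖ ≤ c})) := by
      ext T
      simp only [Set.mem_setOf_eq, Set.mem_iUnion, Set.mem_inter_iff, Set.mem_preimage]
      constructor
      · intro h
        obtain ⟨r, hr⟩ := exists_nat_ge ‖T‖
        exact ⟨r, hr, h⟩
      · rintro ⟨r, _, h⟩; exact h
    rw [heq]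
    refine MeasurableSet.iUnion fun r => ?_
    have hcl : IsClosed ({T : X →L[ℝ] X | ‖T‖ ≤ (r : ℝ)} ∩
        ((fun T : X →L[ℝ] X => cesaroMean T n x) ⁻¹' {y : X | ‖y‖ ≤ c})) :=
      (h_ces r n x).preimage_isClosed_of_isClosed (h_ball r (Nat.cast_nonneg r))
        (isClosed_le continuous_norm continuous_const)
    exact hcl.measurableSet
  -- main decomposition via a countable dense set
  obtain ⟨D, hDc, hDd⟩ := TopologicalSpace.exists_countable_dense X
  have main : {T : X →L[ℝ] X | CesaroBounded T}
      = ⋃ m : ℕ, ⋂ n : ℕ, ⋂ x ∈ D,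
          {T : X →L[ℝ] X | ‖cesaroMean T n x‖ ≤ (m : ℝ) * ‖x‖} := by
    ext T
    simp only [Set.mem_setOf_eq, Set.mem_iUnion, Set.mem_iInter]
    constructor
    · rintro ⟨M, hM⟩
      obtain ⟨m, hm⟩ := exists_nat_ge M
      refine ⟨m, fun n x _ => ?_⟩
      calc ‖cesaroMean T n x‖ ≤ ‖cesaroMean T n‖ * ‖x‖ := (cesaroMean T n).le_opNorm x
        _ ≤ (m : ℝ) * ‖x‖ :=
          mul_le_mul_of_nonneg_right ((hM n).trans hm) (norm_nonneg x)
    · rintro ⟨m, hm⟩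
      refine ⟨(m : ℝ), fun n => ?_⟩
      refine (cesaroMean T n).opNorm_le_bound (Nat.cast_nonneg m) fun x => ?_
      have hclosed : IsClosed {x : X | ‖cesaroMean T n x‖ ≤ (m : ℝ) * ‖x‖} :=
        isClosed_le ((cesaroMean T n).continuous.norm) (continuous_const.mul continuous_norm)
      have hsub : D ⊆ {x : X | ‖cesaroMean T n x‖ ≤ (m : ℝ) * ‖x‖} :=
        fun y hy => hm n y hy
      exact hclosed.closure_subset_iff.mpr hsub (hDd x)
  rw [main]
  exact MeasurableSet.iUnion fun m => MeasurableSet.iInter fun n =>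
    MeasurableSet.biInter hDc fun x _ => h_set n x _
end

section
/- For any separable Banach space X, the set 𝓔(X) of ergodic operators on X is a Borel set in L(X) equipped with the σ-algebra σ(S_op) generated by the strong operator topology. -/
open Filter Topology

section Aux

variable {X : Type*} [NormedAddCommGroup X] [NormedSpace ℝ X]

lemma meas_nat_cases {α β : Type*} [MeasurableSpace α] [MeasurableSpace β]
    {n : α → ℕ} {F : ℕ → α → β} (hn : Measurable n) (hF : ∀ i, Measurable (F i)) :
    Measurable (fun a => F (n a) a) := by
  intro s hs
  have h : (fun a => F (n a) a) ⁻¹' s = ⋃ i, (n ⁻¹' {i}) ∩ ((F i) ⁻¹' s) := by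
    ext a
    simp only [Set.mem_preimage, Set.mem_iUnion, Set.mem_inter_iff, Set.mem_singleton_iff]
    constructor
    · intro hmem; exact ⟨n a, rfl, hmem⟩
    · rintro ⟨i, hi, hmem⟩; rwa [hi]
  rw [h]
  exact MeasurableSet.iUnion fun i => (hn (measurableSet_singleton i)).inter (hF i hs)

lemma meas_eval (x : X) :
    @Measurable _ _ (@borel _ (sot X)) (borel X) (fun T : X →L[ℝ] X => T x) := by
  letI : TopologicalSpace (X →L[ℝ] X) := sot X
  letI : MeasurableSpace (X →L[ℝ] X) := borel _
  haveI : BorelSpace (X →L[ℝ] X) := ⟨rfl⟩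
  letI : MeasurableSpace X := borel X
  haveI : BorelSpace X := ⟨rfl⟩
  have hc : Continuous (fun T : X →L[ℝ] X => T x) := by
    have h1 : Continuous (fun T : X →L[ℝ] X => (T : X → X)) := continuous_induced_dom
    exact (continuous_apply x).comp h1
  exact hc.measurable

lemma meas_apply [TopologicalSpace.SeparableSpace X]
    {f : (X →L[ℝ] X) → X} (hf : @Measurable _ _ (@borel _ (sot X)) (borel X) f) :
    @Measurable _ _ (@borel _ (sot X)) (borel X) (fun T => T (f T)) := by
  letI : MeasurableSpace (X →L[ℝ] X) := @borel _ (sot X)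
  letI : MeasurableSpace X := borel X
  haveI : BorelSpace X := ⟨rfl⟩
  haveI : Nonempty X := ⟨0⟩
  set d : ℕ → X := TopologicalSpace.denseSeq X with hd
  have hdr : DenseRange d := TopologicalSpace.denseRange_denseSeq X
  have hex : ∀ (m : ℕ) (y : X), ∃ i, dist y (d i) < 1 / (m + 1 : ℝ) :=
    fun m y => Metric.denseRange_iff.mp hdr y _ (by positivity)
  set idx : ℕ → X → ℕ := fun m y => Nat.find (hex m y) with hidxdef
  have hidx : ∀ m, Measurable (idx m) := by
    intro m
    apply measurable_to_nat
    intro y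
    have h : idx m ⁻¹' {idx m y} =
        Metric.ball (d (idx m y)) (1 / (m + 1 : ℝ)) ∩
          ⋂ j, ⋂ _ : j < idx m y, (Metric.ball (d j) (1 / (m + 1 : ℝ)))ᶜ := by
      ext y'
      simp only [Set.mem_preimage, Set.mem_singleton_iff, Set.mem_inter_iff, Set.mem_iInter,
        Set.mem_compl_iff, Metric.mem_ball]
      rw [hidxdef]
      simp only []
      rw [Nat.find_eq_iff (hex m y')]
    rw [h]
    exact measurableSet_ball.inter
      (MeasurableSet.iInter fun j => MeasurableSet.iInter fun _ => measurableSet_ball.compl)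
  have hg : ∀ m : ℕ, Measurable (fun T : X →L[ℝ] X => T (d (idx m (f T)))) :=
    fun m => meas_nat_cases ((hidx m).comp hf) (fun i => meas_eval (d i))
  apply measurable_of_tendsto_metrizable hg
  rw [tendsto_pi_nhds]
  intro T
  rw [tendsto_iff_dist_tendsto_zero]
  apply squeeze_zero (g := fun m : ℕ => ‖T‖ * (1 / (m + 1 : ℝ))) (fun m => dist_nonneg)
  · intro m
    have h1 : dist (T (d (idx m (f T)))) (T (f T)) ≤ ‖T‖ * dist (d (idx m (f T))) (f T) := by
      simpa using (T.lipschitz.dist_le_mul (d (idx m (f T))) (f T))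
    have h2 : dist (d (idx m (f T))) (f T) ≤ 1 / (m + 1 : ℝ) := by
      rw [dist_comm]
      exact (Nat.find_spec (hex m (f T))).le
    calc dist (T (d (idx m (f T)))) (T (f T)) ≤ ‖T‖ * dist (d (idx m (f T))) (f T) := h1
      _ ≤ ‖T‖ * (1 / (m + 1 : ℝ)) := mul_le_mul_of_nonneg_left h2 (norm_nonneg T)
  · have h := tendsto_one_div_add_atTop_nhds_zero_nat (𝕜 := ℝ)
    simpa using h.const_mul ‖T‖


lemma meas_pow [TopologicalSpace.SeparableSpace X] (k : ℕ) (x : X) :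
    @Measurable _ _ (@borel _ (sot X)) (borel X) (fun T : X →L[ℝ] X => (T ^ k) x) := by
  letI : MeasurableSpace (X →L[ℝ] X) := @borel _ (sot X)
  letI : MeasurableSpace X := borel X
  haveI : BorelSpace X := ⟨rfl⟩
  induction k with
  | zero =>
      simp only [pow_zero, ContinuousLinearMap.one_apply]
      exact measurable_const
  | succ k ih =>
      have h : (fun T : X →L[ℝ] X => (T ^ (k + 1)) x) = fun T => T ((T ^ k) x) := by
        funext T
        rw [pow_succ']
        rfl
      rw [h]
      exact meas_apply ih

lemma meas_cesaro [TopologicalSpace.SeparableSpace X] (n : ℕ) (x : X) :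
    @Measurable _ _ (@borel _ (sot X)) (borel X) (fun T : X →L[ℝ] X => cesaroMean T n x) := by
  letI : MeasurableSpace (X →L[ℝ] X) := @borel _ (sot X)
  letI : MeasurableSpace X := borel X
  haveI : BorelSpace X := ⟨rfl⟩
  haveI : SecondCountableTopology X :=
    UniformSpace.secondCountable_of_separable X
  have h : (fun T : X →L[ℝ] X => cesaroMean T n x)
      = fun T => (n : ℝ)⁻¹ • ∑ k ∈ Finset.range n, (T ^ k) x := by
    funext T
    simp [cesaroMean]
  rw [h]
  have hsum : Measurable (fun T : X →L[ℝ] X => ∑ k ∈ Finset.range n, (T ^ k) x) :=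
    Finset.measurable_sum _ (fun k _ => meas_pow k x)
  exact ((continuous_const_smul ((n : ℝ)⁻¹)).measurable).comp hsum

end Aux


/-- For a separable Banach space `X`, the set of ergodic operators is Borel in
`L(X)` with the σ-algebra generated by the strong operator topology. -/
theorem stmt_4 (X : Type*) [NormedAddCommGroup X] [NormedSpace ℝ X] [CompleteSpace X]
    [TopologicalSpace.SeparableSpace X] :
    @MeasurableSet (X →L[ℝ] X) (@borel _ (sot X))
      {T : X →L[ℝ] X | IsErgodicOp T} := by
  letI : MeasurableSpace (X →L[ℝ] X) := @borel _ (sot X)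
  letI : MeasurableSpace X := borel X
  haveI : BorelSpace X := ⟨rfl⟩
  haveI : SecondCountableTopology X := UniformSpace.secondCountable_of_separable X
  haveI : Nonempty X := ⟨0⟩
  set d : ℕ → X := TopologicalSpace.denseSeq X with hd
  have hdr : DenseRange d := TopologicalSpace.denseRange_denseSeq X
  have hset : {T : X →L[ℝ] X | IsErgodicOp T} =
      (⋃ M : ℕ, ⋂ n : ℕ, ⋂ i : ℕ, {T : X →L[ℝ] X | ‖cesaroMean T n (d i)‖ ≤ (M : ℝ) * ‖d i‖}) ∩
        (⋂ i : ℕ, ⋂ k : ℕ, ⋃ N : ℕ, ⋂ j : ℕ,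
          {T : X →L[ℝ] X |
            dist (cesaroMean T (N + j) (d i)) (cesaroMean T N (d i)) < 1 / (k + 1 : ℝ)}) := by
    ext T
    simp only [Set.mem_setOf_eq, Set.mem_inter_iff, Set.mem_iUnion, Set.mem_iInter]
    constructor
    · intro hT
      have hb : ∀ x : X, ∃ C : ℝ, ∀ n : ℕ, ‖cesaroMean T n x‖ ≤ C := by
        intro x
        obtain ⟨y, hy⟩ := hT x
        obtain ⟨C, hC⟩ := hy.norm.bddAbove_range
        exact ⟨C, fun n => hC ⟨n, rfl⟩⟩
      obtain ⟨C, hC⟩ := banach_steinhaus hb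
      refine ⟨⟨⌈C⌉₊, fun n i => ?_⟩, fun i k => ?_⟩
      · calc ‖cesaroMean T n (d i)‖ ≤ ‖cesaroMean T n‖ * ‖d i‖ :=
              (cesaroMean T n).le_opNorm _
          _ ≤ (⌈C⌉₊ : ℝ) * ‖d i‖ :=
              mul_le_mul_of_nonneg_right ((hC n).trans (Nat.le_ceil C)) (norm_nonneg _)
      · obtain ⟨y, hy⟩ := hT (d i)
        obtain ⟨N, hN⟩ := Metric.cauchySeq_iff'.mp hy.cauchySeq (1 / (k + 1 : ℝ)) (by positivity)
        exact ⟨N, fun j => hN (N + j) (Nat.le_add_right N j)⟩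
    · rintro ⟨⟨M, hM⟩, hcau⟩
      have hMn : ∀ (n : ℕ) (x : X), ‖cesaroMean T n x‖ ≤ (M : ℝ) * ‖x‖ := by
        intro n
        have hclosed : IsClosed {x : X | ‖cesaroMean T n x‖ ≤ (M : ℝ) * ‖x‖} :=
          isClosed_le ((cesaroMean T n).continuous.norm) (continuous_const.mul continuous_norm)
        have hsub : Set.range d ⊆ {x : X | ‖cesaroMean T n x‖ ≤ (M : ℝ) * ‖x‖} := by
          rintro _ ⟨i, rfl⟩; exact hM n i
        intro x
        exact closure_minimal hsub hclosed (hdr x)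
      intro x
      have hcx : CauchySeq (fun n => cesaroMean T n x) := by
        rw [Metric.cauchySeq_iff']
        intro ε hε
        obtain ⟨k, hk⟩ := exists_nat_one_div_lt (show (0 : ℝ) < ε / 3 by linarith)
        obtain ⟨i, hi⟩ := Metric.denseRange_iff.mp hdr x (ε / (3 * ((M : ℝ) + 1)))
          (by positivity)
        obtain ⟨N, hN⟩ := hcau i k
        refine ⟨N, fun n hn => ?_⟩
        have hdist : ∀ m : ℕ, dist (cesaroMean T m x) (cesaroMean T m (d i))
            ≤ (M : ℝ) * dist x (d i) := by
          intro m
          rw [dist_eq_norm, ← map_sub, dist_eq_norm]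
          exact hMn m _
        have hmid : dist (cesaroMean T n (d i)) (cesaroMean T N (d i)) < 1 / (k + 1 : ℝ) := by
          have h := hN (n - N)
          rwa [Nat.add_sub_cancel' hn] at h
        have htri : dist (cesaroMean T n x) (cesaroMean T N x) ≤
            dist (cesaroMean T n x) (cesaroMean T n (d i)) +
            dist (cesaroMean T n (d i)) (cesaroMean T N (d i)) +
            dist (cesaroMean T N (d i)) (cesaroMean T N x) := dist_triangle4 _ _ _ _
        have h3 : dist (cesaroMean T N (d i)) (cesaroMean T N x)
            ≤ (M : ℝ) * dist x (d i) := by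
          rw [dist_comm]; exact hdist N
        have hMδ : (M : ℝ) * dist x (d i) ≤ ε / 3 := by
          have h0 : (0 : ℝ) ≤ (M : ℝ) := Nat.cast_nonneg M
          have h1 : (M : ℝ) * dist x (d i) ≤ (M : ℝ) * (ε / (3 * ((M : ℝ) + 1))) :=
            mul_le_mul_of_nonneg_left hi.le h0
          have h2 : (M : ℝ) * (ε / (3 * ((M : ℝ) + 1))) ≤ ε / 3 := by
            rw [mul_div_assoc', div_le_div_iff₀ (by positivity) (by norm_num : (0 : ℝ) < 3)]
            nlinarith [hε.le]
          linarith
        linarith [hdist n, htri, hmid, h3, hk]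
      obtain ⟨y, hy⟩ := cauchySeq_tendsto_of_complete hcx
      exact ⟨y, hy⟩
  rw [hset]
  refine MeasurableSet.inter ?_ ?_
  · exact MeasurableSet.iUnion fun M => MeasurableSet.iInter fun n =>
      MeasurableSet.iInter fun i =>
        measurableSet_le ((meas_cesaro n (d i)).norm) measurable_const
  · exact MeasurableSet.iInter fun i => MeasurableSet.iInter fun k =>
      MeasurableSet.iUnion fun N => MeasurableSet.iInter fun j =>
        measurableSet_lt ((meas_cesaro (N + j) (d i)).dist (meas_cesaro N (d i)))
          measurable_const
end

section
/- Let X be a separable Banach space, n ≥ 1 and k ≥ 1 natural numbers, and σ a finite sequence of natural numbers. Then the set of operators T with ‖T‖ ≤ n that are Cesàro-bounded and satisfy σ ∈ 𝒜_e(T, 1/k) is a Borel subset of the Polish space of continuous linear operators on X of norm at most n equipped with the strong operator topology. -/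
open Filter Topology

noncomputable section

def SOTB (X : Type*) [NormedAddCommGroup X] [NormedSpace ℝ X] (c : ℝ) : Type _ :=
  {T : X →L[ℝ] X // ‖T‖ ≤ c}

namespace SOTB

variable {X : Type*} [NormedAddCommGroup X] [NormedSpace ℝ X] {c : ℝ}

def op : SOTB X c → X →L[ℝ] X := Subtype.val

lemma norm_op_le (T : SOTB X c) : ‖T.op‖ ≤ c := Subtype.prop T

instance : TopologicalSpace (SOTB X c) := TopologicalSpace.induced op (sot X)

instance : MeasurableSpace (SOTB X c) := borel _

instance : BorelSpace (SOTB X c) := ⟨rfl⟩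

lemma cont_eval (x : X) : Continuous (fun T : SOTB X c => T.op x) := by
  letI : TopologicalSpace (X →L[ℝ] X) := sot X
  have h1 : Continuous (fun T : SOTB X c => T.op) := continuous_induced_dom
  have h2 : Continuous (fun f : X →L[ℝ] X => (f : X → X)) := continuous_induced_dom
  exact (continuous_apply x).comp (h2.comp h1)

lemma cont_apply {f : SOTB X c → X} (hf : Continuous f) :
    Continuous (fun T : SOTB X c => T.op (f T)) := by
  rw [continuous_iff_continuousAt]
  intro T₀
  rw [ContinuousAt, tendsto_iff_norm_sub_tendsto_zero]
  have hbound : ∀ T : SOTB X c, ‖T.op (f T) - T₀.op (f T₀)‖ ≤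
      c * ‖f T - f T₀‖ + ‖T.op (f T₀) - T₀.op (f T₀)‖ := by
    intro T
    have tri : ‖T.op (f T) - T₀.op (f T₀)‖ ≤
        ‖T.op (f T) - T.op (f T₀)‖ + ‖T.op (f T₀) - T₀.op (f T₀)‖ := by
      have := dist_triangle (T.op (f T)) (T.op (f T₀)) (T₀.op (f T₀))
      simpa [dist_eq_norm] using this
    refine tri.trans ?_
    gcongr ?_ + _
    rw [← map_sub]
    exact le_trans ((T.op).le_opNorm _)
      (mul_le_mul_of_nonneg_right (norm_op_le T) (norm_nonneg _))
  refine squeeze_zero (fun T => norm_nonneg _) hbound ?_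
  have h1 : Tendsto (fun T : SOTB X c => ‖f T - f T₀‖) (𝓝 T₀) (𝓝 0) := by
    rw [← tendsto_iff_norm_sub_tendsto_zero]
    exact hf.continuousAt
  have h2 : Tendsto (fun T : SOTB X c => ‖T.op (f T₀) - T₀.op (f T₀)‖) (𝓝 T₀) (𝓝 0) := by
    rw [← tendsto_iff_norm_sub_tendsto_zero]
    exact (cont_eval (f T₀)).continuousAt
  simpa using (h1.const_mul c).add h2

lemma cont_pow (j : ℕ) (x : X) : Continuous (fun T : SOTB X c => (T.op ^ j) x) := by
  induction j with
  | zero => simpa using continuous_const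
  | succ j ih =>
      have h := cont_apply ih
      have : (fun T : SOTB X c => (T.op ^ (j + 1)) x)
          = fun T : SOTB X c => T.op ((T.op ^ j) x) := by
        funext T
        rw [pow_succ']
        rfl
      rw [this]
      exact h

lemma cont_cesaro (m : ℕ) (x : X) :
    Continuous (fun T : SOTB X c => cesaroMean T.op m x) := by
  have : (fun T : SOTB X c => cesaroMean T.op m x)
      = fun T : SOTB X c => (m : ℝ)⁻¹ • ∑ j ∈ Finset.range m, (T.op ^ j) x := by
    funext T
    simp [cesaroMean, ContinuousLinearMap.sum_apply]
  rw [this]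
  exact (continuous_finset_sum _ fun j _ => cont_pow j x).const_smul _

end SOTB


section PointwiseLemmas

variable {X : Type*} [NormedAddCommGroup X] [NormedSpace ℝ X]

lemma cesaroBounded_iff' {D : Set X} (hD : Dense D) (T : X →L[ℝ] X) :
    CesaroBounded T ↔ ∃ M : ℕ, ∀ m : ℕ, ∀ d ∈ D, ‖cesaroMean T m d‖ ≤ (M : ℝ) * ‖d‖ := by
  constructor
  · rintro ⟨M, hM⟩
    refine ⟨⌈M⌉₊, fun m d _ => ?_⟩
    calc ‖cesaroMean T m d‖ ≤ ‖cesaroMean T m‖ * ‖d‖ := (cesaroMean T m).le_opNorm d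
      _ ≤ (⌈M⌉₊ : ℝ) * ‖d‖ :=
        mul_le_mul_of_nonneg_right ((hM m).trans (Nat.le_ceil M)) (norm_nonneg d)
  · rintro ⟨M, hM⟩
    refine ⟨M, fun m => ContinuousLinearMap.opNorm_le_bound _ (Nat.cast_nonneg M) fun x => ?_⟩
    have hcl : IsClosed {y : X | ‖cesaroMean T m y‖ ≤ (M : ℝ) * ‖y‖} :=
      isClosed_le ((cesaroMean T m).continuous.norm) (continuous_const.mul continuous_norm)
    exact closure_minimal (fun d hd => hM m d hd) hcl (hD x)

lemma exists_ball_iff' {D : Set X} (hD : Dense D) {ε : ℝ} (hε : 0 < ε) (T : X →L[ℝ] X)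
    (L : List ℕ) :
    (∃ x : X, ‖x‖ ≤ 1 ∧ ∀ p : ℕ, p + 1 < L.length →
        ε < ‖cesaroMean T (L.getD p 0) x - cesaroMean T (L.getD (p + 1) 0) x‖) ↔
    (∃ d ∈ D, ‖d‖ ≤ 1 ∧ ∀ p : ℕ, p + 1 < L.length →
        ε < ‖cesaroMean T (L.getD p 0) d - cesaroMean T (L.getD (p + 1) 0) d‖) := by
  constructor
  · rintro ⟨x, hx1, hx2⟩
    set U : Set X := {y : X | ∀ p : ℕ, p + 1 < L.length →
      ε < ‖cesaroMean T (L.getD p 0) y - cesaroMean T (L.getD (p + 1) 0) y‖} with hUdef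
    have hU : IsOpen U := by
      have hUeq : U = ⋂ p ∈ Finset.range L.length, {y : X | p + 1 < L.length →
          ε < ‖cesaroMean T (L.getD p 0) y - cesaroMean T (L.getD (p + 1) 0) y‖} := by
        ext y
        simp only [hUdef, Set.mem_setOf_eq, Set.mem_iInter, Finset.mem_range]
        exact ⟨fun h p _ hp => h p hp, fun h p hp => h p (Nat.lt_of_succ_lt hp) hp⟩
      rw [hUeq]
      refine isOpen_biInter_finset fun p _ => ?_
      by_cases hp : p + 1 < L.length
      · have : {y : X | p + 1 < L.length →
            ε < ‖cesaroMean T (L.getD p 0) y - cesaroMean T (L.getD (p + 1) 0) y‖}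
            = {y : X | ε < ‖cesaroMean T (L.getD p 0) y - cesaroMean T (L.getD (p + 1) 0) y‖} := by
          ext y; simp [hp]
        rw [this]
        exact isOpen_lt continuous_const
          (((cesaroMean T (L.getD p 0)).continuous.sub
            (cesaroMean T (L.getD (p + 1) 0)).continuous).norm)
      · have : {y : X | p + 1 < L.length →
            ε < ‖cesaroMean T (L.getD p 0) y - cesaroMean T (L.getD (p + 1) 0) y‖}
            = Set.univ := by
          ext y; simp [hp]
        rw [this]; exact isOpen_univ
    have hxU : x ∈ U := hx2
    have hc : Continuous (fun t : ℝ => t • x) := continuous_id.smul continuous_const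
    have hpre : IsOpen ((fun t : ℝ => t • x) ⁻¹' U) := hU.preimage hc
    have h1 : (1 : ℝ) ∈ (fun t : ℝ => t • x) ⁻¹' U := by
      simp only [Set.mem_preimage, one_smul]; exact hxU
    obtain ⟨η, hη, hball⟩ := Metric.isOpen_iff.mp hpre 1 h1
    set t : ℝ := 1 - min η 1 / 2 with htdef
    have hmin0 : 0 < min η 1 := lt_min hη one_pos
    have hmin1 : min η 1 ≤ 1 := min_le_right _ _
    have ht0 : 0 < t := by
      have : min η 1 / 2 ≤ 1 / 2 := by linarith
      simp only [htdef]; linarith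
    have ht1 : t < 1 := by simp only [htdef]; linarith
    have htU : t • x ∈ U := by
      apply hball
      simp only [Metric.mem_ball, Real.dist_eq, htdef]
      have : min η 1 / 2 < η := by
        have := min_le_left η 1
        linarith
      rw [show |1 - min η 1 / 2 - 1| = min η 1 / 2 by rw [abs_of_nonpos] <;> linarith]
      exact this
    have htball : t • x ∈ Metric.ball (0 : X) 1 := by
      rw [mem_ball_zero_iff, norm_smul, Real.norm_eq_abs, abs_of_pos ht0]
      calc t * ‖x‖ ≤ t * 1 := by
            exact mul_le_mul_of_nonneg_left hx1 ht0.le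
        _ < 1 := by linarith
    obtain ⟨d, hdD, hdU⟩ := hD.exists_mem_open (hU.inter Metric.isOpen_ball) ⟨t • x, htU, htball⟩
    exact ⟨d, hdD, (mem_ball_zero_iff.mp hdU.2).le, hdU.1⟩
  · rintro ⟨d, _, hd1, hd2⟩
    exact ⟨d, hd1, hd2⟩

end PointwiseLemmas



/-- For a separable Banach space `X`, `n, k ≥ 1` and a finite sequence `σ`, the set of
Cesàro-bounded operators of norm `≤ n` with `σ ∈ 𝒜_e(T, 1/k)` is Borel in the Polish space
of operators of norm at most `n` with the strong operator topology. -/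
theorem stmt_7 (X : Type*) [NormedAddCommGroup X] [NormedSpace ℝ X] [CompleteSpace X]
    [TopologicalSpace.SeparableSpace X] (n k : ℕ) (hn : 1 ≤ n) (hk : 1 ≤ k) (σ : List ℕ) :
    @MeasurableSet {T : X →L[ℝ] X // ‖T‖ ≤ (n : ℝ)}
      (@borel _ (TopologicalSpace.induced (fun T => T.1) (sot X)))
      {T : {T : X →L[ℝ] X // ‖T‖ ≤ (n : ℝ)} |
        CesaroBounded T.1 ∧ σ ∈ ergoTree T.1 (1 / (k : ℝ))} := by
  obtain ⟨D, hDc, hDd⟩ := TopologicalSpace.exists_countable_dense X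
  have hε : (0 : ℝ) < 1 / (k : ℝ) := by
    have : (0 : ℝ) < (k : ℝ) := by exact_mod_cast Nat.lt_of_lt_of_le Nat.zero_lt_one hk
    positivity
  show MeasurableSet {T : SOTB X (n : ℝ) | CesaroBounded T.op ∧ σ ∈ ergoTree T.op (1 / (k : ℝ))}
  have hset : {T : SOTB X (n : ℝ) | CesaroBounded T.op ∧ σ ∈ ergoTree T.op (1 / (k : ℝ))} =
      (⋃ M : ℕ, ⋂ m : ℕ, ⋂ d ∈ D,
          {T : SOTB X (n : ℝ) | ‖cesaroMean T.op m d‖ ≤ (M : ℝ) * ‖d‖}) ∩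
      ({T : SOTB X (n : ℝ) | σ.Chain' (· < ·)} ∩
        ({T : SOTB X (n : ℝ) | σ.length ≤ 1} ∪
          ⋃ d ∈ D, ({T : SOTB X (n : ℝ) | ‖d‖ ≤ 1} ∩
            ⋂ p : ℕ, {T : SOTB X (n : ℝ) | p + 1 < σ.length →
              1 / (k : ℝ) < ‖cesaroMean T.op (σ.getD p 0) d
                - cesaroMean T.op (σ.getD (p + 1) 0) d‖}))) := by
    ext T
    simp only [Set.mem_setOf_eq, Set.mem_inter_iff, Set.mem_union, Set.mem_iUnion,
      Set.mem_iInter, exists_prop, ergoTree]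
    rw [cesaroBounded_iff' hDd T.op, exists_ball_iff' hDd hε T.op σ]
  rw [hset]
  refine MeasurableSet.inter ?_ (MeasurableSet.inter (MeasurableSet.const _)
    (MeasurableSet.union (MeasurableSet.const _) ?_))
  · refine MeasurableSet.iUnion fun M => MeasurableSet.iInter fun m => ?_
    refine MeasurableSet.biInter hDc fun d _ => ?_
    exact (isClosed_le ((SOTB.cont_cesaro m d).norm) continuous_const).measurableSet
  · refine MeasurableSet.biUnion hDc fun d _ => ?_
    refine (MeasurableSet.const _).inter (MeasurableSet.iInter fun p => ?_)
    by_cases hp : p + 1 < σ.length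
    · have : {T : SOTB X (n : ℝ) | p + 1 < σ.length →
          1 / (k : ℝ) < ‖cesaroMean T.op (σ.getD p 0) d - cesaroMean T.op (σ.getD (p + 1) 0) d‖}
          = {T : SOTB X (n : ℝ) |
          1 / (k : ℝ) < ‖cesaroMean T.op (σ.getD p 0) d - cesaroMean T.op (σ.getD (p + 1) 0) d‖} := by
        ext T; simp [hp]
      rw [this]
      exact (isOpen_lt continuous_const
        (((SOTB.cont_cesaro (σ.getD p 0) d).sub (SOTB.cont_cesaro (σ.getD (p + 1) 0) d)).norm)).measurableSet
    · have : {T : SOTB X (n : ℝ) | p + 1 < σ.length →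
          1 / (k : ℝ) < ‖cesaroMean T.op (σ.getD p 0) d - cesaroMean T.op (σ.getD (p + 1) 0) d‖}
          = Set.univ := by
        ext T; simp [hp]
      rw [this]
      exact MeasurableSet.univ

end
end

section
/- Let X be a separable Banach space and n ≥ 1. Then the set of operators T with ‖T‖ ≤ n that are Cesàro-bounded and satisfy condition (NSE) is an analytic subset of the Polish space of continuous linear operators on X of norm at most n with the strong operator topology; equivalently, the set of Cesàro-bounded operators of norm at most n not satisfying (NSE) (i.e., the super-ergodic ones) is coanalytic in that Polish space. -/
open Filter Topology

section Aux
variable {X : Type*} [NormedAddCommGroup X] [NormedSpace ℝ X]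

attribute [local instance 2000] sot

variable {c : ℝ}

lemma cont_coe : Continuous (fun T : X →L[ℝ] X => (T : X → X)) :=
  continuous_induced_dom

lemma cont_eval (x : X) : Continuous (fun T : {T : X →L[ℝ] X // ‖T‖ ≤ c} => T.1 x) :=
  (continuous_apply x).comp (cont_coe.comp continuous_subtype_val)

lemma cont_eval2 : Continuous (fun p : {T : X →L[ℝ] X // ‖T‖ ≤ c} × X => p.1.1 p.2) := by
  rw [continuous_iff_continuousAt]
  rintro ⟨T, z⟩
  have hc : (0:ℝ) ≤ c := le_trans (norm_nonneg _) T.2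
  have hb : Tendsto (fun p : {T : X →L[ℝ] X // ‖T‖ ≤ c} × X =>
      ‖p.1.1 z - T.1 z‖ + c * ‖p.2 - z‖) (𝓝 (T, z)) (𝓝 0) := by
    have : Continuous (fun p : {T : X →L[ℝ] X // ‖T‖ ≤ c} × X =>
        ‖p.1.1 z - T.1 z‖ + c * ‖p.2 - z‖) := by
      exact ((((cont_eval z).comp continuous_fst).sub continuous_const).norm).add
        (continuous_const.mul ((continuous_snd.sub continuous_const).norm))
    have h0 := this.continuousAt (x := (T, z))
    simpa [ContinuousAt, sub_self] using h0
  rw [ContinuousAt, Metric.tendsto_nhds]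
  intro ε hε
  filter_upwards [hb.eventually (gt_mem_nhds hε)] with p hp
  have h1 : dist (p.1.1 p.2) (T.1 z) ≤ ‖p.1.1 z - T.1 z‖ + c * ‖p.2 - z‖ := by
    rw [dist_eq_norm]
    calc ‖p.1.1 p.2 - T.1 z‖ ≤ ‖p.1.1 p.2 - p.1.1 z‖ + ‖p.1.1 z - T.1 z‖ := norm_sub_le_norm_sub_add_norm_sub _ _ _
    _ ≤ c * ‖p.2 - z‖ + ‖p.1.1 z - T.1 z‖ := by
        gcongr
        calc ‖p.1.1 p.2 - p.1.1 z‖ = ‖p.1.1 (p.2 - z)‖ := by rw [map_sub]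
        _ ≤ ‖p.1.1‖ * ‖p.2 - z‖ := p.1.1.le_opNorm _
        _ ≤ c * ‖p.2 - z‖ := by gcongr; exact p.1.2
    _ = ‖p.1.1 z - T.1 z‖ + c * ‖p.2 - z‖ := by ring
  exact lt_of_le_of_lt h1 hp

lemma cont_pow (k : ℕ) (x : X) :
    Continuous (fun T : {T : X →L[ℝ] X // ‖T‖ ≤ c} => (T.1 ^ k) x) := by
  induction k with
  | zero => simpa using continuous_const
  | succ k ih =>
      have : (fun T : {T : X →L[ℝ] X // ‖T‖ ≤ c} => (T.1 ^ (k+1)) x)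
          = fun T => T.1 ((T.1 ^ k) x) := by
        funext T
        rw [pow_succ']
        rfl
      rw [this]
      exact cont_eval2.comp (continuous_id.prodMk ih)

lemma cont_cesaro (m : ℕ) (x : X) :
    Continuous (fun T : {T : X →L[ℝ] X // ‖T‖ ≤ c} => cesaroMean T.1 m x) := by
  have : (fun T : {T : X →L[ℝ] X // ‖T‖ ≤ c} => cesaroMean T.1 m x)
      = fun T => (m:ℝ)⁻¹ • ∑ k ∈ Finset.range m, (T.1 ^ k) x := by
    funext T
    simp [cesaroMean, ContinuousLinearMap.sum_apply]
  rw [this]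
  exact (continuous_finset_sum _ fun k _ => cont_pow k x).const_smul _

end Aux

section Polish
variable {X : Type*} [NormedAddCommGroup X] [NormedSpace ℝ X] [CompleteSpace X]
  [TopologicalSpace.SeparableSpace X]

attribute [local instance 2000] sot

variable (X) in
/-- The evaluation-on-a-dense-sequence map. -/
noncomputable def Phi (c : ℝ) : {T : X →L[ℝ] X // ‖T‖ ≤ c} → (ℕ → X) :=
  fun T i => T.1 (TopologicalSpace.denseSeq X i)

variable {c : ℝ}

lemma cont_Phi : Continuous (Phi X c) :=
  continuous_pi fun i => cont_eval _

lemma inj_Phi : Function.Injective (Phi X c) := by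
  intro T T' h
  ext x
  have := DenseRange.equalizer (TopologicalSpace.denseRange_denseSeq X)
    (map_continuous T.1) (map_continuous T'.1) (funext fun i => congrFun h i)
  exact congrFun this x

lemma approx_Phi {y : ℕ → X} (hy : y ∈ closure (Set.range (Phi X c)))
    (s : Finset ℕ) {ε : ℝ} (hε : 0 < ε) :
    ∃ T : X →L[ℝ] X, ‖T‖ ≤ c ∧ ∀ i ∈ s, ‖T (TopologicalSpace.denseSeq X i) - y i‖ < ε := by
  have hU : {z : ℕ → X | ∀ i ∈ s, ‖z i - y i‖ < ε} ∈ 𝓝 y := by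
    rw [Filter.eventually_iff.symm] at *
    rw [eventually_all_finset]
    intro i _
    have : Tendsto (fun z : ℕ → X => z i) (𝓝 y) (𝓝 (y i)) := (continuous_apply i).tendsto y
    have := this.eventually (p := fun w => ‖w - y i‖ < ε) ?_
    · exact this
    · have : {w : X | ‖w - y i‖ < ε} ∈ 𝓝 (y i) := by
        have := Metric.ball_mem_nhds (y i) hε
        simpa [Metric.ball, dist_eq_norm] using this
      exact this
  obtain ⟨z, hz, T, hT⟩ := mem_closure_iff_nhds.1 hy _ hU
  exact ⟨T.1, T.2, by
    intro i hi
    have := hz i hi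
    rw [← hT] at this
    exact this⟩

lemma lin_est {y : ℕ → X} (hy : y ∈ closure (Set.range (Phi X c)))
    (a b : ℝ) (i j k : ℕ) :
    ‖a • y i + b • y j - y k‖ ≤
      c * ‖a • TopologicalSpace.denseSeq X i + b • TopologicalSpace.denseSeq X j -
        TopologicalSpace.denseSeq X k‖ := by
  set d := TopologicalSpace.denseSeq X
  refine le_of_forall_pos_le_add fun ε hε => ?_
  have hε' : 0 < ε / (|a| + |b| + 1) := by positivity
  obtain ⟨T, hTc, hT⟩ := approx_Phi hy {i, j, k} hε'
  have hi := hT i (by simp)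
  have hj := hT j (by simp)
  have hk := hT k (by simp)
  have key : a • y i + b • y j - y k =
      a • (y i - T (d i)) + b • (y j - T (d j)) - (y k - T (d k))
        + T (a • d i + b • d j - d k) := by
    simp only [map_add, map_sub, map_smul]
    module
  rw [key]
  have h1 : ‖a • (y i - T (d i)) + b • (y j - T (d j)) - (y k - T (d k))‖
      ≤ (|a| + |b| + 1) * (ε / (|a| + |b| + 1)) := by
    calc ‖a • (y i - T (d i)) + b • (y j - T (d j)) - (y k - T (d k))‖
        ≤ ‖a • (y i - T (d i)) + b • (y j - T (d j))‖ + ‖y k - T (d k)‖ := norm_sub_le _ _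
      _ ≤ ‖a • (y i - T (d i))‖ + ‖b • (y j - T (d j))‖ + ‖y k - T (d k)‖ := by
          gcongr; exact norm_add_le _ _
      _ = |a| * ‖y i - T (d i)‖ + |b| * ‖y j - T (d j)‖ + ‖y k - T (d k)‖ := by
          rw [norm_smul, norm_smul, Real.norm_eq_abs, Real.norm_eq_abs]
      _ ≤ |a| * (ε / (|a| + |b| + 1)) + |b| * (ε / (|a| + |b| + 1)) + (ε / (|a| + |b| + 1)) := by
          have hi' : ‖y i - T (d i)‖ ≤ ε / (|a| + |b| + 1) := by
            rw [norm_sub_rev]; exact hi.le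
          have hj' : ‖y j - T (d j)‖ ≤ ε / (|a| + |b| + 1) := by
            rw [norm_sub_rev]; exact hj.le
          have hk' : ‖y k - T (d k)‖ ≤ ε / (|a| + |b| + 1) := by
            rw [norm_sub_rev]; exact hk.le
          gcongr
      _ = (|a| + |b| + 1) * (ε / (|a| + |b| + 1)) := by ring
  have h2 : ‖T (a • d i + b • d j - d k)‖ ≤ c * ‖a • d i + b • d j - d k‖ := by
    calc ‖T (a • d i + b • d j - d k)‖ ≤ ‖T‖ * ‖a • d i + b • d j - d k‖ := T.le_opNorm _
      _ ≤ c * ‖a • d i + b • d j - d k‖ := by gcongr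
  have heq : (|a| + |b| + 1) * (ε / (|a| + |b| + 1)) = ε := by
    field_simp
  calc ‖_ + _‖ ≤ ‖a • (y i - T (d i)) + b • (y j - T (d j)) - (y k - T (d k))‖
        + ‖T (a • d i + b • d j - d k)‖ := norm_add_le _ _
    _ ≤ (|a| + |b| + 1) * (ε / (|a| + |b| + 1)) + c * ‖a • d i + b • d j - d k‖ := by gcongr
    _ = c * ‖a • d i + b • d j - d k‖ + ε := by rw [heq]; ring

end Polish
section Polish2
variable {X : Type*} [NormedAddCommGroup X] [NormedSpace ℝ X] [CompleteSpace X]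
  [TopologicalSpace.SeparableSpace X]

attribute [local instance 2000] sot

variable {c : ℝ}

lemma closedRange_Phi : IsClosed (Set.range (Phi X c)) := by
  refine isClosed_of_closure_subset fun y hy => ?_
  set d := TopologicalSpace.denseSeq X with hd
  have hdr : DenseRange d := TopologicalSpace.denseRange_denseSeq X
  obtain ⟨T₀, hT₀, -⟩ := approx_Phi hy ∅ one_pos
  have hc0 : (0:ℝ) ≤ c := le_trans (norm_nonneg _) hT₀
  have hseq : ∀ x : X, ∃ φ : ℕ → ℕ, Tendsto (fun k => d (φ k)) atTop (𝓝 x) := by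
    intro x
    obtain ⟨u, hu, hlim⟩ := mem_closure_iff_seq_limit.1 (hdr x)
    choose φ hφ using hu
    refine ⟨φ, ?_⟩
    have : (fun k => d (φ k)) = u := funext hφ
    rw [this]; exact hlim
  have lip : ∀ i j : ℕ, ‖y i - y j‖ ≤ c * ‖d i - d j‖ := by
    intro i j
    have := lin_est hy 1 0 i i j
    simpa using this
  have glim : ∀ x : X, ∃ z : X, ∀ φ : ℕ → ℕ, Tendsto (fun k => d (φ k)) atTop (𝓝 x) →
      Tendsto (fun k => y (φ k)) atTop (𝓝 z) := by
    intro x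
    obtain ⟨φ₀, hφ₀⟩ := hseq x
    have hcauchy : CauchySeq (fun k => y (φ₀ k)) := by
      rw [Metric.cauchySeq_iff]
      intro ε hε
      obtain ⟨N, hN⟩ := Metric.cauchySeq_iff.1 hφ₀.cauchySeq (ε/(c+1)) (by positivity)
      refine ⟨N, fun m hm k hk => ?_⟩
      rw [dist_eq_norm]
      calc ‖y (φ₀ m) - y (φ₀ k)‖ ≤ c * ‖d (φ₀ m) - d (φ₀ k)‖ := lip _ _
        _ ≤ c * (ε/(c+1)) := by
            gcongr
            rw [← dist_eq_norm]
            exact (hN m hm k hk).le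
        _ < (c+1) * (ε/(c+1)) := by
            have : (0:ℝ) < ε/(c+1) := by positivity
            nlinarith
        _ = ε := by field_simp
    obtain ⟨z, hz⟩ := cauchySeq_tendsto_of_complete hcauchy
    refine ⟨z, fun φ hφ => ?_⟩
    refine hz.congr_dist (squeeze_zero (g := fun k => c * dist (d (φ₀ k)) (d (φ k)))
      (fun k => dist_nonneg) (fun k => ?_) ?_)
    · show dist (y (φ₀ k)) (y (φ k)) ≤ c * dist (d (φ₀ k)) (d (φ k))
      rw [dist_eq_norm, dist_eq_norm]
      exact lip _ _
    · have h0 : Tendsto (fun k => dist (d (φ₀ k)) (d (φ k))) atTop (𝓝 (dist x x)) :=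
        hφ₀.dist hφ
      rw [dist_self] at h0
      simpa using h0.const_mul c
  choose g hg using glim
  have hgd : ∀ i, g (d i) = y i := fun i =>
    tendsto_nhds_unique (hg (d i) (fun _ => i) tendsto_const_nhds) tendsto_const_nhds
  have hconv : ∀ (w : X) (χ : ℕ → ℕ) (u : ℕ → X), Tendsto u atTop (𝓝 w) →
      (∀ k, ‖d (χ k) - u k‖ < 1/(k+1)) → Tendsto (fun k => d (χ k)) atTop (𝓝 w) := by
    intro w χ u hu hcl
    refine hu.congr_dist (squeeze_zero (g := fun k : ℕ => 1/((k:ℝ)+1))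
      (fun k => dist_nonneg) (fun k => ?_) tendsto_one_div_add_atTop_nhds_zero_nat)
    show dist (u k) (d (χ k)) ≤ 1/((k:ℝ)+1)
    rw [dist_comm, dist_eq_norm]
    exact (hcl k).le
  have hadd : ∀ x x' : X, g (x + x') = g x + g x' := by
    intro x x'
    obtain ⟨φ, hφ⟩ := hseq x
    obtain ⟨ψ, hψ⟩ := hseq x'
    have hχ : ∀ k : ℕ, ∃ i : ℕ, ‖d i - (d (φ k) + d (ψ k))‖ < 1/(k+1) := by
      intro k
      obtain ⟨i, hi⟩ := hdr.exists_dist_lt (d (φ k) + d (ψ k))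
        (show (0:ℝ) < 1/(k+1) by positivity)
      exact ⟨i, by rw [← dist_eq_norm, dist_comm]; exact hi⟩
    choose χ hχ using hχ
    have hdχ : Tendsto (fun k => d (χ k)) atTop (𝓝 (x + x')) :=
      hconv _ χ _ (hφ.add hψ) hχ
    have h3 : Tendsto (fun k => y (χ k)) atTop (𝓝 (g (x+x'))) := hg _ χ hdχ
    have h4 : Tendsto (fun k => y (φ k)) atTop (𝓝 (g x)) := hg _ φ hφ
    have h5 : Tendsto (fun k => y (ψ k)) atTop (𝓝 (g x')) := hg _ ψ hψ
    have hbnd : ∀ k : ℕ, ‖y (φ k) + y (ψ k) - y (χ k)‖ ≤ c * (1/((k:ℝ)+1)) := by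
      intro k
      calc ‖y (φ k) + y (ψ k) - y (χ k)‖
            ≤ c * ‖d (φ k) + d (ψ k) - d (χ k)‖ := by
              have := lin_est hy 1 1 (φ k) (ψ k) (χ k)
              simpa using this
          _ ≤ c * (1/((k:ℝ)+1)) := by
              gcongr
              rw [norm_sub_rev]
              exact (hχ k).le
    have h6 : Tendsto (fun k => y (φ k) + y (ψ k) - y (χ k)) atTop (𝓝 0) :=
      squeeze_zero_norm hbnd
        (by simpa using tendsto_one_div_add_atTop_nhds_zero_nat.const_mul c)
    have h7 : Tendsto (fun k => (y (φ k) + y (ψ k) - y (χ k)) + y (χ k)) atTop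
        (𝓝 (0 + g (x+x'))) := h6.add h3
    simp only [sub_add_cancel, zero_add] at h7
    exact tendsto_nhds_unique h7 (h4.add h5)
  have hsmul : ∀ (r : ℝ) (x : X), g (r • x) = r • g x := by
    intro r x
    obtain ⟨φ, hφ⟩ := hseq x
    have hχ : ∀ k : ℕ, ∃ i : ℕ, ‖d i - r • d (φ k)‖ < 1/(k+1) := by
      intro k
      obtain ⟨i, hi⟩ := hdr.exists_dist_lt (r • d (φ k))
        (show (0:ℝ) < 1/(k+1) by positivity)
      exact ⟨i, by rw [← dist_eq_norm, dist_comm]; exact hi⟩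
    choose χ hχ using hχ
    have hdχ : Tendsto (fun k => d (χ k)) atTop (𝓝 (r • x)) :=
      hconv _ χ _ (hφ.const_smul r) hχ
    have h3 : Tendsto (fun k => y (χ k)) atTop (𝓝 (g (r • x))) := hg _ χ hdχ
    have h4 : Tendsto (fun k => r • y (φ k)) atTop (𝓝 (r • g x)) := (hg _ φ hφ).const_smul r
    have hbnd : ∀ k : ℕ, ‖r • y (φ k) - y (χ k)‖ ≤ c * (1/((k:ℝ)+1)) := by
      intro k
      calc ‖r • y (φ k) - y (χ k)‖
            ≤ c * ‖r • d (φ k) - d (χ k)‖ := by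
              have := lin_est hy r 0 (φ k) (φ k) (χ k)
              simpa using this
          _ ≤ c * (1/((k:ℝ)+1)) := by
              gcongr
              rw [norm_sub_rev]
              exact (hχ k).le
    have h6 : Tendsto (fun k => r • y (φ k) - y (χ k)) atTop (𝓝 0) :=
      squeeze_zero_norm hbnd
        (by simpa using tendsto_one_div_add_atTop_nhds_zero_nat.const_mul c)
    have h7 : Tendsto (fun k => (r • y (φ k) - y (χ k)) + y (χ k)) atTop
        (𝓝 (0 + g (r • x))) := h6.add h3
    simp only [sub_add_cancel, zero_add] at h7
    exact tendsto_nhds_unique h7 h4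
  have hbound : ∀ x, ‖g x‖ ≤ c * ‖x‖ := by
    intro x
    obtain ⟨φ, hφ⟩ := hseq x
    have h4 := hg x φ hφ
    have hb : ∀ k, ‖y (φ k)‖ ≤ c * ‖d (φ k)‖ := by
      intro k
      have := lin_est hy 0 0 (φ k) (φ k) (φ k)
      simpa using this
    exact le_of_tendsto_of_tendsto' h4.norm (hφ.norm.const_mul c) hb
  let L : X →ₗ[ℝ] X :=
    { toFun := g
      map_add' := hadd
      map_smul' := by intro r x; simpa using hsmul r x }
  refine ⟨⟨L.mkContinuous c hbound, L.mkContinuous_norm_le hc0 hbound⟩, ?_⟩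
  funext i
  show L.mkContinuous c hbound (d i) = y i
  exact hgd i

lemma inducing_Phi : Topology.IsInducing (Phi X c) := by
  have key : ∀ x : X,
      Continuous[TopologicalSpace.induced (Phi X c) Pi.topologicalSpace, inferInstance]
        (fun T : {T : X →L[ℝ] X // ‖T‖ ≤ c} => T.1 x) := by
    intro x
    letI tΦ : TopologicalSpace {T : X →L[ℝ] X // ‖T‖ ≤ c} :=
      TopologicalSpace.induced (Phi X c) Pi.topologicalSpace
    rw [continuous_iff_continuousAt]
    intro T
    rw [ContinuousAt, Metric.tendsto_nhds]
    intro ε hε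
    have hc0 : (0:ℝ) ≤ c := le_trans (norm_nonneg _) T.2
    obtain ⟨i, hi⟩ := (TopologicalSpace.denseRange_denseSeq X).exists_dist_lt x
      (show (0:ℝ) < ε/(4*(c+1)) by positivity)
    set d := TopologicalSpace.denseSeq X
    rw [nhds_induced]
    rw [Filter.eventually_comap]
    have hev : (fun z : ℕ → X => z i) ⁻¹' Metric.ball (Phi X c T i) (ε/2) ∈
        𝓝 (Phi X c T) :=
      (continuous_apply i).continuousAt (Metric.ball_mem_nhds _ (by positivity))
    filter_upwards [hev] with z hz T' hT'
    subst hT'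
    have h1 : ‖T'.1 (d i) - T.1 (d i)‖ < ε/2 := by
      have := hz
      rw [Set.mem_preimage, Metric.mem_ball, dist_eq_norm] at this
      exact this
    have h2 : ∀ S : {T : X →L[ℝ] X // ‖T‖ ≤ c}, ‖S.1 x - S.1 (d i)‖ ≤ ε/4 := by
      intro S
      have hxd : ‖x - d i‖ ≤ ε/(4*(c+1)) := by rw [← dist_eq_norm]; exact hi.le
      calc ‖S.1 x - S.1 (d i)‖ = ‖S.1 (x - d i)‖ := by rw [map_sub]
        _ ≤ ‖S.1‖ * ‖x - d i‖ := S.1.le_opNorm _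
        _ ≤ c * ‖x - d i‖ := by gcongr; exact S.2
        _ ≤ c * (ε/(4*(c+1))) := by gcongr
        _ ≤ (c+1) * (ε/(4*(c+1))) := by
            have h0 : (0:ℝ) ≤ ε/(4*(c+1)) := by positivity
            nlinarith
        _ = ε/4 := by field_simp
    rw [dist_eq_norm]
    calc ‖T'.1 x - T.1 x‖
        ≤ ‖T'.1 x - T'.1 (d i)‖ + ‖T'.1 (d i) - T.1 x‖ :=
          norm_sub_le_norm_sub_add_norm_sub _ _ _
      _ ≤ ‖T'.1 x - T'.1 (d i)‖ + (‖T'.1 (d i) - T.1 (d i)‖ + ‖T.1 (d i) - T.1 x‖) := by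
          gcongr
          exact norm_sub_le_norm_sub_add_norm_sub _ _ _
      _ < ε/4 + (ε/2 + ε/4) := by
          have h3 := h2 T'
          have h4 := h2 T
          rw [norm_sub_rev] at h4
          exact add_lt_add_of_le_of_lt h3 (add_lt_add_of_lt_of_le h1 h4)
      _ = ε := by ring
  have step : TopologicalSpace.induced (Phi X c) Pi.topologicalSpace ≤
      TopologicalSpace.induced (fun T : {T : X →L[ℝ] X // ‖T‖ ≤ c} => (T.1 : X → X))
        Pi.topologicalSpace := by
    have e2 : TopologicalSpace.induced
        (fun T : {T : X →L[ℝ] X // ‖T‖ ≤ c} => (T.1 : X → X)) Pi.topologicalSpace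
        = ⨅ x : X, TopologicalSpace.induced
            (fun T : {T : X →L[ℝ] X // ‖T‖ ≤ c} => T.1 x) (inferInstance : TopologicalSpace X) := by
      rw [show (Pi.topologicalSpace : TopologicalSpace (X → X)) =
        ⨅ x : X, TopologicalSpace.induced (fun f : X → X => f x) (inferInstance : TopologicalSpace X) from rfl,
        induced_iInf]
      simp only [induced_compose]
      rfl
    rw [e2]
    refine le_iInf fun x => ?_
    exact (@continuous_iff_le_induced _ _ _
      (TopologicalSpace.induced (Phi X c) Pi.topologicalSpace) _).mp (key x)
  refine ⟨le_antisymm (continuous_iff_le_induced.mp cont_Phi) ?_⟩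
  have e1 : (instTopologicalSpaceSubtype : TopologicalSpace {T : X →L[ℝ] X // ‖T‖ ≤ c}) =
      TopologicalSpace.induced (fun T : {T : X →L[ℝ] X // ‖T‖ ≤ c} => (T.1 : X → X))
        Pi.topologicalSpace := by
    rw [show (instTopologicalSpaceSubtype : TopologicalSpace {T : X →L[ℝ] X // ‖T‖ ≤ c}) =
      TopologicalSpace.induced Subtype.val (sot X) from rfl,
      show sot X = TopologicalSpace.induced
        (fun T : X →L[ℝ] X => (T : X → X)) Pi.topologicalSpace from rfl,
      induced_compose]
    rfl
  rw [e1]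
  exact step

lemma polish_ball : PolishSpace {T : X →L[ℝ] X // ‖T‖ ≤ c} :=
  Topology.IsClosedEmbedding.polishSpace
    (⟨⟨inducing_Phi, inj_Phi⟩, closedRange_Phi⟩ : Topology.IsClosedEmbedding (Phi X c))

end Polish2


section Final

attribute [local instance 2000] sot

/-- For a separable Banach space `X` and `n ≥ 1`, the set of Cesàro-bounded operators of
norm `≤ n` satisfying (NSE) is analytic in the Polish space of operators of norm at most `n`
with the strong operator topology (equivalently, the super-ergodic ones are coanalytic). -/
theorem stmt_8 (X : Type*) [NormedAddCommGroup X] [NormedSpace ℝ X] [CompleteSpace X]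
    [TopologicalSpace.SeparableSpace X] (n : ℕ) (hn : 1 ≤ n) :
    @MeasureTheory.AnalyticSet {T : X →L[ℝ] X // ‖T‖ ≤ (n : ℝ)}
      (TopologicalSpace.induced (fun T => T.1) (sot X))
      {T : {T : X →L[ℝ] X // ‖T‖ ≤ (n : ℝ)} | CesaroBounded T.1 ∧ NSE T.1} := by

  classical
  show MeasureTheory.AnalyticSet
    {T : {T : X →L[ℝ] X // ‖T‖ ≤ (n : ℝ)} | CesaroBounded T.1 ∧ NSE T.1}
  haveI : PolishSpace {T : X →L[ℝ] X // ‖T‖ ≤ (n:ℝ)} := polish_ball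
  letI : MeasurableSpace ({T : X →L[ℝ] X // ‖T‖ ≤ (n:ℝ)} × (ℕ → ℕ)) := borel _
  haveI : BorelSpace ({T : X →L[ℝ] X // ‖T‖ ≤ (n:ℝ)} × (ℕ → ℕ)) := ⟨rfl⟩
  set F : ℕ × ℕ → Set ({T : X →L[ℝ] X // ‖T‖ ≤ (n:ℝ)} × (ℕ → ℕ)) := fun Mk =>
    {q | (∀ m : ℕ, ∀ x : X, ‖cesaroMean q.1.1 m x‖ ≤ (Mk.1 : ℝ) * ‖x‖) ∧
      StrictMono q.2 ∧
      ∀ m : ℕ, ∃ x : X, ‖x‖ ≤ 1 ∧ ∀ p ≤ m,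
        1/((Mk.2:ℝ)+1) < ‖cesaroMean q.1.1 (q.2 p) x - cesaroMean q.1.1 (q.2 (p+1)) x‖}
    with hF
  have hS : {T : {T : X →L[ℝ] X // ‖T‖ ≤ (n:ℝ)} | CesaroBounded T.1 ∧ NSE T.1}
      = ⋃ Mk : ℕ × ℕ, Prod.fst '' F Mk := by
    ext T
    simp only [Set.mem_setOf_eq, Set.mem_iUnion, Set.mem_image, hF]
    constructor
    · rintro ⟨⟨M, hM⟩, ε, hε, j, hj, hjs⟩
      obtain ⟨k, hk⟩ := exists_nat_one_div_lt hε
      refine ⟨(⌈M⌉₊, k), (T, j), ⟨?_, hj, ?_⟩, rfl⟩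
      · intro m x
        calc ‖cesaroMean T.1 m x‖ ≤ ‖cesaroMean T.1 m‖ * ‖x‖ :=
              (cesaroMean T.1 m).le_opNorm x
          _ ≤ ((⌈M⌉₊ : ℕ) : ℝ) * ‖x‖ := by
              gcongr
              exact le_trans (hM m) (Nat.le_ceil M)
      · intro m
        obtain ⟨x, hx1, hx2⟩ := hjs m
        exact ⟨x, hx1, fun p hp => lt_trans hk (hx2 p hp)⟩
    · rintro ⟨⟨M, k⟩, q, ⟨hb, hsm, hnse⟩, rfl⟩
      refine ⟨⟨(M:ℝ), fun m => ?_⟩, 1/((k:ℝ)+1), by positivity, q.2, hsm, hnse⟩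
      exact (cesaroMean q.1.1 m).opNorm_le_bound (by positivity) (hb m)
  rw [hS]
  apply MeasureTheory.AnalyticSet.iUnion
  intro Mk
  have h1 : IsClosed {q : {T : X →L[ℝ] X // ‖T‖ ≤ (n:ℝ)} × (ℕ → ℕ) |
      ∀ m : ℕ, ∀ x : X, ‖cesaroMean q.1.1 m x‖ ≤ (Mk.1:ℝ) * ‖x‖} := by
    have e : {q : {T : X →L[ℝ] X // ‖T‖ ≤ (n:ℝ)} × (ℕ → ℕ) |
        ∀ m : ℕ, ∀ x : X, ‖cesaroMean q.1.1 m x‖ ≤ (Mk.1:ℝ) * ‖x‖}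
        = ⋂ m : ℕ, ⋂ x : X, {q : {T : X →L[ℝ] X // ‖T‖ ≤ (n:ℝ)} × (ℕ → ℕ) |
            ‖cesaroMean q.1.1 m x‖ ≤ (Mk.1:ℝ) * ‖x‖} := by
      ext q
      simp [Set.mem_iInter]
    rw [e]
    exact isClosed_iInter fun m => isClosed_iInter fun x =>
      isClosed_le (((cont_cesaro m x).comp continuous_fst).norm) continuous_const
  have h2 : IsClosed {q : {T : X →L[ℝ] X // ‖T‖ ≤ (n:ℝ)} × (ℕ → ℕ) | StrictMono q.2} := by
    have e : {q : {T : X →L[ℝ] X // ‖T‖ ≤ (n:ℝ)} × (ℕ → ℕ) | StrictMono q.2}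
        = ⋂ a : ℕ, {q : {T : X →L[ℝ] X // ‖T‖ ≤ (n:ℝ)} × (ℕ → ℕ) | q.2 a < q.2 (a+1)} := by
      ext q
      simp only [Set.mem_setOf_eq, Set.mem_iInter]
      exact ⟨fun h a => h (Nat.lt_succ_self a), fun h => strictMono_nat_of_lt_succ h⟩
    rw [e]
    refine isClosed_iInter fun a => ?_
    have e2 : {q : {T : X →L[ℝ] X // ‖T‖ ≤ (n:ℝ)} × (ℕ → ℕ) | q.2 a < q.2 (a+1)}
        = (fun q : {T : X →L[ℝ] X // ‖T‖ ≤ (n:ℝ)} × (ℕ → ℕ) => (q.2 a, q.2 (a+1))) ⁻¹'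
          {p : ℕ × ℕ | p.1 < p.2} := rfl
    rw [e2]
    exact (isClosed_discrete _).preimage
      (((continuous_apply a).comp continuous_snd).prodMk
        ((continuous_apply (a+1)).comp continuous_snd))
  have hopen : ∀ m : ℕ, IsOpen {q : {T : X →L[ℝ] X // ‖T‖ ≤ (n:ℝ)} × (ℕ → ℕ) |
      ∃ x : X, ‖x‖ ≤ 1 ∧ ∀ p ≤ m,
        1/((Mk.2:ℝ)+1) < ‖cesaroMean q.1.1 (q.2 p) x - cesaroMean q.1.1 (q.2 (p+1)) x‖} := by
    intro m
    have e : {q : {T : X →L[ℝ] X // ‖T‖ ≤ (n:ℝ)} × (ℕ → ℕ) |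
        ∃ x : X, ‖x‖ ≤ 1 ∧ ∀ p ≤ m,
          1/((Mk.2:ℝ)+1) < ‖cesaroMean q.1.1 (q.2 p) x - cesaroMean q.1.1 (q.2 (p+1)) x‖}
        = ⋃ x : X, ⋃ (_ : ‖x‖ ≤ 1), ⋂ p : Fin (m+1),
            {q : {T : X →L[ℝ] X // ‖T‖ ≤ (n:ℝ)} × (ℕ → ℕ) |
              1/((Mk.2:ℝ)+1) < ‖cesaroMean q.1.1 (q.2 p.1) x
                - cesaroMean q.1.1 (q.2 (p.1+1)) x‖} := by
      ext q
      simp only [Set.mem_setOf_eq, Set.mem_iUnion, Set.mem_iInter]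
      constructor
      · rintro ⟨x, hx, h⟩
        exact ⟨x, hx, fun p => h p.1 (Nat.lt_succ_iff.1 p.2)⟩
      · rintro ⟨x, hx, h⟩
        exact ⟨x, hx, fun p hp => h ⟨p, Nat.lt_succ_iff.2 hp⟩⟩
    rw [e]
    refine isOpen_iUnion fun x => isOpen_iUnion fun hx => isOpen_iInter_of_finite fun p => ?_
    have e2 : {q : {T : X →L[ℝ] X // ‖T‖ ≤ (n:ℝ)} × (ℕ → ℕ) |
        1/((Mk.2:ℝ)+1) < ‖cesaroMean q.1.1 (q.2 p.1) x - cesaroMean q.1.1 (q.2 (p.1+1)) x‖}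
        = ⋃ a : ℕ, ⋃ b : ℕ,
            ((fun q : {T : X →L[ℝ] X // ‖T‖ ≤ (n:ℝ)} × (ℕ → ℕ) => (q.2 p.1, q.2 (p.1+1))) ⁻¹'
              {(a, b)}) ∩
            {q : {T : X →L[ℝ] X // ‖T‖ ≤ (n:ℝ)} × (ℕ → ℕ) |
              1/((Mk.2:ℝ)+1) < ‖cesaroMean q.1.1 a x - cesaroMean q.1.1 b x‖} := by
      ext q
      simp only [Set.mem_iUnion, Set.mem_inter_iff, Set.mem_preimage, Set.mem_singleton_iff,
        Prod.mk.injEq, Set.mem_setOf_eq]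
      constructor
      · intro h
        exact ⟨q.2 p.1, q.2 (p.1+1), ⟨rfl, rfl⟩, h⟩
      · rintro ⟨a, b, ⟨ha, hb⟩, h⟩
        rw [ha, hb]
        exact h
    rw [e2]
    refine isOpen_iUnion fun a => isOpen_iUnion fun b => IsOpen.inter ?_ ?_
    · exact (isOpen_discrete _).preimage
        (((continuous_apply p.1).comp continuous_snd).prodMk
          ((continuous_apply (p.1+1)).comp continuous_snd))
    · exact isOpen_lt continuous_const
        ((((cont_cesaro a x).comp continuous_fst).sub
          ((cont_cesaro b x).comp continuous_fst)).norm)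
  have hmeas : MeasurableSet (F Mk) := by
    have e : F Mk = {q : {T : X →L[ℝ] X // ‖T‖ ≤ (n:ℝ)} × (ℕ → ℕ) |
        ∀ m : ℕ, ∀ x : X, ‖cesaroMean q.1.1 m x‖ ≤ (Mk.1:ℝ) * ‖x‖}
        ∩ ({q : {T : X →L[ℝ] X // ‖T‖ ≤ (n:ℝ)} × (ℕ → ℕ) | StrictMono q.2}
        ∩ ⋂ m : ℕ, {q : {T : X →L[ℝ] X // ‖T‖ ≤ (n:ℝ)} × (ℕ → ℕ) |
            ∃ x : X, ‖x‖ ≤ 1 ∧ ∀ p ≤ m, 1/((Mk.2:ℝ)+1) <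
              ‖cesaroMean q.1.1 (q.2 p) x - cesaroMean q.1.1 (q.2 (p+1)) x‖}) := by
      ext q
      simp only [hF, Set.mem_setOf_eq, Set.mem_inter_iff, Set.mem_iInter]
    rw [e]
    exact h1.measurableSet.inter (h2.measurableSet.inter
      (MeasurableSet.iInter fun m => (hopen m).measurableSet))
  exact hmeas.analyticSet.image_of_continuous continuous_fst

end Final
end

section
/- Let P be a Polish space and ψ a map from P into the set of trees on ℕ such that for every finite sequence s of natural numbers the set {x ∈ P : s ∈ ψ(x)} is Borel in P. If A is an analytic subset of P such that ψ(x) is well-founded for every x ∈ A, then there exists a countable ordinal α such that the height h(ψ(x)) ≤ α for all x ∈ A. -/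
open Filter Topology

namespace Stmt10Aux


lemma wf_of_no_desc {α : Type*} {r : α → α → Prop}
    (h : ∀ f : ℕ → α, ¬ ∀ n, r (f (n+1)) (f n)) : WellFounded r := by
  constructor
  intro a
  by_contra ha
  have hstep : ∀ x : {a // ¬Acc r a}, ∃ y : {a // ¬Acc r a}, r y.1 x.1 := by
    rintro ⟨x, hx⟩
    obtain ⟨b, hb, hr⟩ := exists_not_acc_lt_of_not_acc hx
    exact ⟨⟨b, hb⟩, hr⟩
  choose F hF using hstep
  exact h (fun n => (F^[n] ⟨a, ha⟩).1)
    (fun n => by simp only [Function.iterate_succ_apply']; exact hF _)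

lemma rank_lt_omega1 {α : Type} [Countable α] {r : α → α → Prop} {a : α} (h : Acc r a) :
    h.rank < (Cardinal.aleph 1).ord := by
  rw [Cardinal.lt_ord]
  refine lt_of_le_of_lt (le_trans ?_ (Cardinal.mk_le_aleph0 (α := α))) Cardinal.aleph0_lt_aleph_one
  have hex : ∀ o : Set.Iio h.rank, ∃ b : α, ∃ hb : Acc r b, hb.rank = o.1 :=
    fun o => Acc.mem_range_rank_of_le h o.2.le
  choose F hF1 hF2 using hex
  have hFinj : Function.Injective F := by
    intro o₁ o₂ he
    refine Subtype.ext ?_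
    rw [← hF2 o₁, ← hF2 o₂]
    exact congr_arg (fun p : {b // Acc r b} => p.2.rank)
      (Subtype.ext (a1 := ⟨F o₁, hF1 o₁⟩) (a2 := ⟨F o₂, hF1 o₂⟩) he)
  have hle : Cardinal.lift.{0} (Cardinal.mk (Set.Iio h.rank)) ≤ Cardinal.lift.{1} (Cardinal.mk α) :=
    Cardinal.lift_mk_le'.mpr ⟨⟨F, hFinj⟩⟩
  rw [Ordinal.mk_Iio_ordinal] at hle
  simp only [Cardinal.lift_lift, Cardinal.lift_le] at hle
  exact_mod_cast hle



/-- finite prefix of an infinite sequence -/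
def pre (z : ℕ → ℕ) (n : ℕ) : List ℕ := (List.range n).map z

@[simp] lemma pre_length (z : ℕ → ℕ) (n : ℕ) : (pre z n).length = n := by simp [pre]

lemma pre_getD (z : ℕ → ℕ) {j n : ℕ} (h : j < n) : (pre z n).getD j 0 = z j := by
  rw [List.getD_eq_getElem _ _ (by simpa using h)]
  simp [pre]

lemma pre_prefix (z : ℕ → ℕ) {m n : ℕ} (h : m ≤ n) : pre z m <+: pre z n := by
  have : pre z m = (pre z n).take m := by
    simp [pre, ← List.map_take, List.take_range, Nat.min_eq_left h]
  rw [this]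
  exact List.take_prefix _ _

lemma prefix_getD {β : Type*} {l₁ l₂ : List β} (h : l₁ <+: l₂) {j : ℕ} (hj : j < l₁.length)
    (d : β) : l₂.getD j d = l₁.getD j d := by
  rw [List.getD_eq_getElem _ _ hj, List.getD_eq_getElem _ _ (hj.trans_le h.length_le)]
  exact (h.getElem hj).symm

lemma chain_prefix {β : Type*} (L : ℕ → List β) (hL : ∀ m, L m <+: L (m+1)) :
    ∀ {m m'}, m ≤ m' → L m <+: L m' := by
  intro m m' h
  induction h with
  | refl => exact List.prefix_refl _
  | step h' ih => exact ih.trans (hL _)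

lemma chain_getD {β : Type*} (L : ℕ → List β) (hL : ∀ m, L m <+: L (m+1)) (d : β)
    {j m m'} (h : j < (L m).length) (h' : j < (L m').length) :
    (L m).getD j d = (L m').getD j d := by
  rcases le_total m m' with hle | hle
  · exact (prefix_getD (chain_prefix L hL hle) h d).symm
  · exact prefix_getD (chain_prefix L hL hle) h' d

lemma strict_prefix_length_lt {l₁ l₂ : List ℕ} (h : l₁ <+: l₂) (hne : l₁ ≠ l₂) :
    l₁.length < l₂.length :=
  lt_of_le_of_ne h.length_le (fun he => hne (h.eq_of_length he))

/-- From a strictly increasing sequence of nodes of a prefix-closed tree, get an infinite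
branch; so the tree is not well-founded. -/
lemma no_treeWF (𝒜 : Set (List ℕ)) (hcl : ∀ s t : List ℕ, s <+: t → t ∈ 𝒜 → s ∈ 𝒜)
    (S : ℕ → List ℕ) (hchain : ∀ i, S i <+: S (i+1) ∧ S i ≠ S (i+1))
    (hmem : ∀ i, S (i+1) ∈ 𝒜) : ¬ TreeWF 𝒜 := by
  intro hwf
  apply hwf
  have hpre : ∀ {i m}, i ≤ m → S i <+: S m := fun h => chain_prefix S (fun m => (hchain m).1) h
  have hlen : ∀ i, i ≤ (S i).length := by
    intro i
    induction i with
    | zero => exact Nat.zero_le _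
    | succ i ih =>
      have := strict_prefix_length_lt (hchain i).1 (hchain i).2
      omega
  refine ⟨fun m => (S (m+1)).getD m 0, fun m => ?_⟩
  have hkey : (List.range m).map (fun j => (S (j+1)).getD j 0) = (S (m+1)).take m := by
    apply List.ext_getElem
    · have := hlen (m+1); simp; omega
    · intro j hj hj'
      simp only [List.getElem_map, List.getElem_range, List.getElem_take]
      have hjm : j < m := by simpa using hj
      have hjlen : j < (S (j+1)).length := lt_of_lt_of_le (Nat.lt_succ_self j) (hlen (j+1))
      rw [List.getD_eq_getElem _ _ hjlen]
      exact (hpre (by omega : j + 1 ≤ m + 1)).getElem hjlen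
  rw [hkey]
  exact hcl _ _ (List.take_prefix _ _) (hmem m)

lemma wf_treeRel (𝒜 : Set (List ℕ)) (hcl : ∀ s t : List ℕ, s <+: t → t ∈ 𝒜 → s ∈ 𝒜)
    (hwf : TreeWF 𝒜) : WellFounded (treeRel 𝒜) := by
  apply wf_of_no_desc
  intro f hf
  exact no_treeWF 𝒜 hcl f (fun i => ⟨(hf i).2.2.1, (hf i).2.2.2⟩) (fun i => (hf i).2.1) hwf

end Stmt10Aux


namespace Stmt10Aux

lemma getD_range_map (F : ℕ → List ℕ) {k i : ℕ} (h : i < k) :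
    ((List.range k).map F).getD i [] = F i := by
  rw [List.getD_eq_getElem _ _ (by simpa using h)]
  simp

/-- Nodes of the Kunen–Martin tree: a finite chain of tree-nodes, a finite approximation
of a point of Baire space, and finite approximations of witnesses. -/
abbrev Node : Type := List (List ℕ) × List ℕ × List (List ℕ)

/-- proper extension of finite sequences -/
def pext (a b : List ℕ) : Prop := a <+: b ∧ a ≠ b

/-- finite consistency condition for "`g s` maps some extension of `v` to an extension
of `u`", with `E s` nonempty. -/
def TT (E : List ℕ → Set (ℕ → ℕ)) (g : List ℕ → (ℕ → ℕ) → ℕ → ℕ)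
    (s v u : List ℕ) : Prop :=
  (E s).Nonempty ∧ ∃ w : ℕ → ℕ, (∀ j < v.length, w j = v.getD j 0) ∧
    (∀ j < u.length, g s w j = u.getD j 0)

/-- Valid nodes of the Kunen–Martin tree. -/
def ValidN (E : List ℕ → Set (ℕ → ℕ)) (g : List ℕ → (ℕ → ℕ) → ℕ → ℕ) (N : Node) : Prop :=
  0 < N.1.length ∧ N.1.getD 0 [] = [] ∧ List.Chain' pext N.1 ∧
  N.2.1.length = N.1.length ∧ N.2.2.length + 1 = N.1.length ∧
  ∀ i, i + 1 < N.1.length → (((N.2.2.getD i []).length = N.1.length) ∧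
    TT E g (N.1.getD (i+1) []) (N.2.2.getD i []) N.2.1)

/-- The (reversed) relation of proper extension between valid nodes. -/
def RN (E : List ℕ → Set (ℕ → ℕ)) (g : List ℕ → (ℕ → ℕ) → ℕ → ℕ) : Node → Node → Prop :=
  fun N' N => ValidN E g N' ∧ ValidN E g N ∧ N.1 <+: N'.1 ∧ N.1.length < N'.1.length ∧
    N.2.1 <+: N'.2.1 ∧ ∀ i, N.2.2.getD i [] <+: N'.2.2.getD i []

/-- Good chains: finite strict chains of elements of the tree `{t | y ∈ E t}`,
starting at the empty sequence. -/
def GoodC (E : List ℕ → Set (ℕ → ℕ)) (y : ℕ → ℕ) (c : List (List ℕ)) : Prop :=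
  0 < c.length ∧ c.getD 0 [] = [] ∧ List.Chain' pext c ∧
  ∀ i, i + 1 < c.length → y ∈ E (c.getD (i+1) [])

/-- The map sending a good chain to a node of the Kunen–Martin tree. -/
def phi (wit : List ℕ → (ℕ → ℕ) → ℕ → ℕ) (y : ℕ → ℕ) (c : List (List ℕ)) : Node :=
  (c, pre y c.length,
    (List.range (c.length - 1)).map fun i => pre (wit (c.getD (i+1) []) y) c.length)

variable {E : List ℕ → Set (ℕ → ℕ)} {g wit : List ℕ → (ℕ → ℕ) → ℕ → ℕ}

lemma goodValid (hgE : ∀ s, (E s).Nonempty → Continuous (g s) ∧ Set.range (g s) = E s)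
    (hwit : ∀ s y, y ∈ E s → g s (wit s y) = y) (y : ℕ → ℕ) (c : List (List ℕ))
    (hc : GoodC E y c) : ValidN E g (phi wit y c) := by
  obtain ⟨h0, hhd, hch, hmem⟩ := hc
  refine ⟨by simpa [phi] using h0, by simpa [phi] using hhd, by simpa [phi] using hch,
    by simp [phi], by simp [phi]; omega, ?_⟩
  intro i hi
  simp only [phi] at hi ⊢
  have hidx : i < c.length - 1 := by omega
  rw [getD_range_map _ hidx]
  have hyE : y ∈ E (c.getD (i+1) []) := hmem i hi
  refine ⟨by simp, ⟨y, hyE⟩, wit (c.getD (i+1) []) y, ?_, ?_⟩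
  · intro j hj
    rw [pre_getD _ (by simpa using hj)]
  · intro j hj
    rw [hwit _ _ hyE, pre_getD _ (by simpa using hj)]

lemma stepR (hgE : ∀ s, (E s).Nonempty → Continuous (g s) ∧ Set.range (g s) = E s)
    (hwit : ∀ s y, y ∈ E s → g s (wit s y) = y) (y : ℕ → ℕ) (c : List (List ℕ))
    (t s : List ℕ) (hc : GoodC E y c) (hlast : c.getLast? = some s)
    (hst : s <+: t) (hne : s ≠ t) (hty : y ∈ E t) :
    GoodC E y (c ++ [t]) ∧ RN E g (phi wit y (c ++ [t])) (phi wit y c) := by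
  obtain ⟨h0, hhd, hch, hmem⟩ := hc
  have hgood : GoodC E y (c ++ [t]) := by
    refine ⟨by simp, by rw [List.getD_append _ _ _ _ h0]; exact hhd, ?_, ?_⟩
    · unfold List.Chain'
      rw [List.isChain_append]
      refine ⟨hch, List.isChain_singleton t, ?_⟩
      intro x hx z hz
      simp only [List.head?_cons, Option.mem_def, Option.some.injEq] at hz
      rw [hlast] at hx
      simp only [Option.mem_def, Option.some.injEq] at hx
      subst hx; subst hz
      exact ⟨hst, hne⟩
    · intro i hi
      simp only [List.length_append, List.length_singleton] at hi
      rcases lt_or_ge (i+1) c.length with h | h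
      · rw [List.getD_append _ _ _ _ h]; exact hmem i h
      · have he : i + 1 = c.length := by omega
        rw [List.getD_append_right _ _ _ _ (by omega), he, Nat.sub_self]
        simpa using hty
  refine ⟨hgood, goodValid hgE hwit y _ hgood, goodValid hgE hwit y c ⟨h0, hhd, hch, hmem⟩,
    ?_, ?_, ?_, ?_⟩
  · simpa [phi] using List.prefix_append c [t]
  · simp [phi]
  · simp only [phi]
    exact pre_prefix y (by simp)
  · intro i
    simp only [phi, List.length_append, List.length_singleton]
    rcases lt_or_ge i (c.length - 1) with h | h
    · rw [getD_range_map _ h, getD_range_map _ (show i < c.length + 1 - 1 by omega),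
        List.getD_append _ _ _ _ (by omega)]
      exact pre_prefix _ (by simp)
    · rw [List.getD_eq_default _ _ (by simpa using h)]
      exact List.nil_prefix

/-- From an infinite descending sequence in the Kunen–Martin tree, extract an
infinite branch. -/
lemma descRN (hgE : ∀ s, (E s).Nonempty → Continuous (g s) ∧ Set.range (g s) = E s)
    (Nf : ℕ → Node) (hdes : ∀ m, RN E g (Nf (m+1)) (Nf m)) :
    ∃ (y : ℕ → ℕ) (S : ℕ → List ℕ), (∀ i, S i <+: S (i+1) ∧ S i ≠ S (i+1)) ∧
      ∀ i, y ∈ E (S (i+1)) := by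
  have hval : ∀ m, ValidN E g (Nf m) := fun m => (hdes m).2.1
  have hkm : ∀ m, (Nf m).1.length < (Nf (m+1)).1.length := fun m => (hdes m).2.2.2.1
  have hk : ∀ m, m < (Nf m).1.length := by
    intro m
    induction m with
    | zero => exact (hval 0).1
    | succ m ih => have := hkm m; omega
  have hssp : ∀ m, (Nf m).1 <+: (Nf (m+1)).1 := fun m => (hdes m).2.2.1
  have huup : ∀ m, (Nf m).2.1 <+: (Nf (m+1)).2.1 := fun m => (hdes m).2.2.2.2.1
  have hvvp : ∀ i m, (Nf m).2.2.getD i [] <+: (Nf (m+1)).2.2.getD i [] :=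
    fun i m => (hdes m).2.2.2.2.2 i
  have hul : ∀ m, (Nf m).2.1.length = (Nf m).1.length := fun m => (hval m).2.2.2.1
  have hvl : ∀ m i, i + 1 < (Nf m).1.length →
      ((Nf m).2.2.getD i []).length = (Nf m).1.length :=
    fun m i h => ((hval m).2.2.2.2.2 i h).1
  set S : ℕ → List ℕ := fun i => (Nf i).1.getD i [] with hS
  have hScoh : ∀ i m, i < (Nf m).1.length → (Nf m).1.getD i [] = S i :=
    fun i m h => chain_getD (fun m => (Nf m).1) hssp [] h (hk i)
  set y : ℕ → ℕ := fun j => (Nf (j+1)).2.1.getD j 0 with hy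
  have hycoh : ∀ j m, j < (Nf m).2.1.length → (Nf m).2.1.getD j 0 = y j := by
    intro j m h
    exact chain_getD (fun m => (Nf m).2.1) huup 0 h (by rw [hul]; have := hk (j+1); omega)
  set W : ℕ → ℕ → ℕ := fun i j => ((Nf (i+j+1)).2.2.getD i []).getD j 0 with hW
  have hWcoh : ∀ i j m, j < ((Nf m).2.2.getD i []).length →
      ((Nf m).2.2.getD i []).getD j 0 = W i j := by
    intro i j m h
    refine chain_getD (fun m => (Nf m).2.2.getD i []) (hvvp i) 0 h ?_
    rw [hvl (i+j+1) i (by have := hk (i+j+1); omega)]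
    have := hk (i+j+1); omega
  refine ⟨y, S, ?_, ?_⟩
  · intro i
    have hlen2 : i + 1 < (Nf (i+1)).1.length := by have := hk (i+1); omega
    have hchain := (hval (i+1)).2.2.1
    unfold List.Chain' at hchain
    rw [List.isChain_iff_getElem] at hchain
    have hcc := hchain i (by omega)
    have e1 : (Nf (i+1)).1.get ⟨i, by omega⟩ = S i := by
      rw [← hScoh i (i+1) (by omega), List.getD_eq_getElem _ _ (by omega)]
      simp
    have e2 : (Nf (i+1)).1.get ⟨i + 1, by omega⟩ = S (i+1) := by
      rw [← hScoh (i+1) (i+1) (by omega), List.getD_eq_getElem _ _ (by omega)]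
      simp
    simp only [List.get_eq_getElem] at e1 e2
    rw [e1, e2] at hcc
    exact hcc
  · intro i
    have hTm : ∀ m, i + 1 < (Nf m).1.length → TT E g (S (i+1)) ((Nf m).2.2.getD i []) (Nf m).2.1 := by
      intro m hm
      have := ((hval m).2.2.2.2.2 i hm).2
      rwa [hScoh (i+1) m hm] at this
    have hne : (E (S (i+1))).Nonempty := (hTm (i+1) (by have := hk (i+1); omega)).1
    obtain ⟨gc, gr⟩ := hgE (S (i+1)) hne
    have hwitm : ∀ m : ℕ, ∃ w : ℕ → ℕ,
        (∀ j < m, w j = W i j) ∧ (∀ j < m, g (S (i+1)) w j = y j) := by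
      intro m
      have hMlen : i + 1 < (Nf (i+m+1)).1.length := by have := hk (i+m+1); omega
      obtain ⟨-, w, hw1, hw2⟩ := hTm (i + m + 1) hMlen
      have hvlen : ((Nf (i+m+1)).2.2.getD i []).length = (Nf (i+m+1)).1.length := hvl _ i hMlen
      have hulen : (Nf (i+m+1)).2.1.length = (Nf (i+m+1)).1.length := hul _
      have hmlt : m < (Nf (i+m+1)).1.length := by have := hk (i+m+1); omega
      refine ⟨w, fun j hj => ?_, fun j hj => ?_⟩
      · rw [hw1 j (by omega), hWcoh i j (i+m+1) (by omega)]
      · rw [hw2 j (by omega), hycoh j (i+m+1) (by omega)]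
    choose wseq hw1 hw2 using hwitm
    have hlim1 : Filter.Tendsto wseq Filter.atTop (nhds (W i)) := by
      rw [tendsto_pi_nhds]
      intro j
      refine Filter.Tendsto.congr' ?_ tendsto_const_nhds
      filter_upwards [Filter.eventually_gt_atTop j] with m hm
      exact (hw1 m j hm).symm
    have hlim2 : Filter.Tendsto (fun m => g (S (i+1)) (wseq m)) Filter.atTop
        (nhds (g (S (i+1)) (W i))) := (gc.tendsto (W i)).comp hlim1
    have hlim3 : Filter.Tendsto (fun m => g (S (i+1)) (wseq m)) Filter.atTop (nhds y) := by
      rw [tendsto_pi_nhds]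
      intro j
      refine Filter.Tendsto.congr' ?_ tendsto_const_nhds
      filter_upwards [Filter.eventually_gt_atTop j] with m hm
      exact (hw2 m j hm).symm
    have hgy : g (S (i+1)) (W i) = y := tendsto_nhds_unique hlim2 hlim3
    rw [← gr]
    exact ⟨W i, hgy⟩

/-- Main rank comparison: the rank of a tree node is dominated by the rank of the
corresponding node of the Kunen–Martin tree. -/
lemma mainRank (hgE : ∀ s, (E s).Nonempty → Continuous (g s) ∧ Set.range (g s) = E s)
    (hwit : ∀ s y, y ∈ E s → g s (wit s y) = y)
    (hwfR : WellFounded (RN E g)) (y : ℕ → ℕ) :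
    ∀ (s : List ℕ) (ha : Acc (treeRel {t : List ℕ | y ∈ E t}) s) (c : List (List ℕ)),
      GoodC E y c → c.getLast? = some s →
      ha.rank ≤ (hwfR.apply (phi wit y c)).rank := by
  intro s ha
  induction ha with
  | intro s hacc IH =>
    intro c hGc hlast
    rw [Acc.rank_eq]
    apply Ordinal.iSup_le
    rintro ⟨t, ht⟩
    rw [Order.succ_le_iff]
    have ht' : s ∈ {t : List ℕ | y ∈ E t} ∧ t ∈ {t : List ℕ | y ∈ E t} ∧ s <+: t ∧ s ≠ t := ht
    obtain ⟨hG', hR'⟩ := stepR (wit := wit) hgE hwit y c t s hGc hlast ht'.2.2.1 ht'.2.2.2 ht'.2.1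
    refine lt_of_le_of_lt (IH t ht (c ++ [t]) hG' (by simp)) ?_
    exact Acc.rank_lt_of_rel (hwfR.apply (phi wit y c)) hR'

end Stmt10Aux

/-- Boundedness of a coanalytic rank on analytic sets: if `ψ` maps a Polish space into trees
on `ℕ`, each `{x | s ∈ ψ x}` is Borel, and `A` is an analytic set on which every `ψ x` is
well-founded, then the heights `h(ψ x)` for `x ∈ A` are bounded by a countable ordinal. -/
theorem stmt_10 (P : Type*) [TopologicalSpace P] [PolishSpace P]
    [MeasurableSpace P] [BorelSpace P]
    (ψ : P → Set (List ℕ))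
    (htree : ∀ x : P, ∀ s t : List ℕ, s <+: t → t ∈ ψ x → s ∈ ψ x)
    (hborel : ∀ s : List ℕ, MeasurableSet {x : P | s ∈ ψ x})
    (A : Set P) (hA : MeasureTheory.AnalyticSet A)
    (hwf : ∀ x ∈ A, TreeWF (ψ x)) :
    ∃ α : Ordinal, α < (Cardinal.aleph 1).ord ∧ ∀ x ∈ A, treeHeight (ψ x) ≤ α := by
  classical
  rw [MeasureTheory.AnalyticSet] at hA
  rcases hA with hAe | ⟨f, fcont, frange⟩
  · refine ⟨0, ?_, ?_⟩
    · rw [Cardinal.lt_ord, Ordinal.card_zero]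
      exact Cardinal.aleph_pos 1
    · intro x hx
      rw [hAe] at hx
      exact absurd hx (Set.notMem_empty x)
  · set E : List ℕ → Set (ℕ → ℕ) := fun s => f ⁻¹' {x : P | s ∈ ψ x} with hE
    have hgex : ∀ s : List ℕ, ∃ g : (ℕ → ℕ) → (ℕ → ℕ),
        (E s).Nonempty → Continuous g ∧ Set.range g = E s := by
      intro s
      have hana : MeasureTheory.AnalyticSet (E s) :=
        ((hborel s).preimage fcont.measurable).analyticSet
      rw [MeasureTheory.AnalyticSet] at hana
      rcases hana with he | ⟨g, hg⟩
      · exact ⟨fun _ _ => 0, fun hne => absurd he hne.ne_empty⟩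
      · exact ⟨g, fun _ => hg⟩
    choose g hg using hgex
    have hwitex : ∀ (s : List ℕ) (y : ℕ → ℕ), ∃ w : ℕ → ℕ, y ∈ E s → g s w = y := by
      intro s y
      by_cases hy : y ∈ E s
      · have : y ∈ Set.range (g s) := by rw [(hg s ⟨y, hy⟩).2]; exact hy
        obtain ⟨w, hw⟩ := this
        exact ⟨w, fun _ => hw⟩
      · exact ⟨fun _ => 0, fun h => absurd h hy⟩
    choose wit hwit using hwitex
    have hmemA : ∀ y : ℕ → ℕ, f y ∈ A := by
      intro y; rw [← frange]; exact Set.mem_range_self y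
    have hwfR : WellFounded (Stmt10Aux.RN E g) := by
      apply Stmt10Aux.wf_of_no_desc
      intro Nf hdes
      obtain ⟨y, S, hSc, hSm⟩ := Stmt10Aux.descRN hg Nf hdes
      exact Stmt10Aux.no_treeWF (ψ (f y)) (htree (f y)) S hSc (fun i => hSm i)
        (hwf (f y) (hmemA y))
    refine ⟨⨆ N : Stmt10Aux.Node, (hwfR.apply N).rank, ?_, ?_⟩
    · rw [Cardinal.ord_aleph]
      exact Ordinal.iSup_lt_omega_one (fun N => by rw [← Cardinal.ord_aleph]; exact Stmt10Aux.rank_lt_omega1 _)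
    · intro x hx
      obtain ⟨y, rfl⟩ : ∃ y, f y = x := by rwa [← frange] at hx
      have hwfT : WellFounded (treeRel (ψ (f y))) :=
        Stmt10Aux.wf_treeRel _ (htree (f y)) (hwf (f y) hx)
      have hθ : treeHeight (ψ (f y)) = (hwfT.apply []).rank := by
        unfold treeHeight
        rw [dif_pos hwfT]
      rw [hθ]
      have hGood : Stmt10Aux.GoodC E y [[]] :=
        ⟨by simp, rfl, List.isChain_singleton _, fun i hi => by simp at hi⟩
      refine le_trans
        (Stmt10Aux.mainRank hg hwit hwfR y [] (hwfT.apply []) [[]] hGood rfl)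
        (Ordinal.le_iSup _ _)
end

section
/- Let P be a Polish space and ψ a map from P into the set of trees on ℕ such that for every finite sequence s of natural numbers the set {x ∈ P : s ∈ ψ(x)} is Borel in P. Then the set C = {x ∈ P : ψ(x) is well-founded} is Borel in P if and only if sup_{x ∈ C} h(ψ(x)) is a countable ordinal, i.e., there exists a countable ordinal α with h(ψ(x)) ≤ α for all x ∈ C. -/
open Filter Topology

namespace Stmt11Aux

open MeasureTheory

/-- downward closure of a tree -/
def Closed (𝒜 : Set (List ℕ)) : Prop := ∀ s t : List ℕ, s <+: t → t ∈ 𝒜 → s ∈ 𝒜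



/-- segment of a sequence -/
def seg (J : ℕ → ℕ) (m : ℕ) : List ℕ := (List.range m).map J

@[simp] lemma seg_length (J : ℕ → ℕ) (m : ℕ) : (seg J m).length = m := by
  simp [seg]

lemma seg_getD (J : ℕ → ℕ) {i m : ℕ} (h : i < m) : (seg J m).getD i 0 = J i := by
  rw [List.getD_eq_getElem _ _ (by simpa using h)]
  simp [seg]

lemma seg_prefix (J : ℕ → ℕ) {m m' : ℕ} (h : m ≤ m') : seg J m <+: seg J m' := by
  have : List.range m = (List.range m').take m := by
    rw [List.take_range, Nat.min_eq_left h]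
  rw [seg, seg, this, List.map_take]
  exact List.take_prefix _ _

lemma prefix_getD {s t : List ℕ} (h : s <+: t) {i : ℕ} (hi : i < s.length) :
    s.getD i 0 = t.getD i 0 := by
  rw [List.getD_eq_getElem _ _ hi, List.getD_eq_getElem _ _ (hi.trans_le h.length_le)]
  exact h.getElem hi

lemma prefix_length_lt {s t : List ℕ} (h : s <+: t) (hne : s ≠ t) : s.length < t.length := by
  rcases lt_or_eq_of_le h.length_le with h' | h'
  · exact h'
  · exact absurd (List.IsPrefix.eq_of_length h h') hne

lemma snoc_prefix {s u : List ℕ} (h : s <+: u) (hl : s.length < u.length) :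
    s ++ [u.getD s.length 0] <+: u := by
  obtain ⟨r, rfl⟩ := h
  rcases r with _ | ⟨a, r⟩
  · simp at hl
  · refine ⟨r, ?_⟩
    have : (s ++ a :: r).getD s.length 0 = a := by
      rw [List.getD_eq_getElem _ _ (by simp), List.getElem_append_right (le_refl _)]
      simp
    rw [this]
    simp

/-- from an increasing chain of nodes in a downward-closed tree, get a branch -/
lemma chain_to_branch {𝒜 : Set (List ℕ)} (hcl : Closed 𝒜) (F : ℕ → List ℕ)
    (hmem : ∀ m, F m ∈ 𝒜) (hch : ∀ m, F m <+: F (m + 1) ∧ F m ≠ F (m + 1)) :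
    ∃ J : ℕ → ℕ, ∀ m : ℕ, (List.range m).map J ∈ 𝒜 := by
  have hpre : ∀ {a b : ℕ}, a ≤ b → F a <+: F b := by
    intro a b hab
    induction b, hab using Nat.le_induction with
    | base => exact List.prefix_refl _
    | succ b _ ih => exact ih.trans (hch b).1
  have hlen : ∀ m, m ≤ (F m).length := by
    intro m
    induction m with
    | zero => exact Nat.zero_le _
    | succ m ih => exact Nat.succ_le_of_lt (ih.trans_lt (prefix_length_lt (hch m).1 (hch m).2))
  refine ⟨fun k => (F (k + 1)).getD k 0, fun m => ?_⟩
  have key : (List.range m).map (fun k => (F (k + 1)).getD k 0) <+: F m := by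
    have : (List.range m).map (fun k => (F (k + 1)).getD k 0) = (F m).take m := by
      apply List.ext_getElem
      · simp [Nat.min_eq_left (hlen m)]
      · intro i h1 h2
        simp only [List.getElem_map, List.getElem_range, List.getElem_take]
        have hi : i < m := by simpa using h1
        have h3 : i < (F (i + 1)).length := lt_of_lt_of_le (Nat.lt_succ_self i) (hlen (i + 1))
        have h4 : i < (F m).length := lt_of_lt_of_le hi (hlen m)
        have := prefix_getD (hpre (show i + 1 ≤ m from hi)) h3
        rw [List.getD_eq_getElem _ _ h3, List.getD_eq_getElem _ _ h4] at this
        rw [List.getD_eq_getElem _ _ h3]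
        exact this
    rw [this]
    exact List.take_prefix _ _
  exact hcl _ _ key (hmem m)

instance treeRel_irrefl (𝒜 : Set (List ℕ)) : IsIrrefl (List ℕ) (treeRel 𝒜) :=
  ⟨fun _ h => h.2.2.2 rfl⟩

instance treeRel_trans (𝒜 : Set (List ℕ)) : IsTrans (List ℕ) (treeRel 𝒜) := by
  constructor
  rintro a b c ⟨hb, ha, hba, hba'⟩ ⟨hc, _, hcb, hcb'⟩
  refine ⟨hc, ha, hcb.trans hba, fun h => ?_⟩
  have h1 := prefix_length_lt hba hba'
  have h2 := prefix_length_lt hcb hcb'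
  rw [h] at h2
  omega

instance treeRel_strictOrder (𝒜 : Set (List ℕ)) : IsStrictOrder (List ℕ) (treeRel 𝒜) where

lemma treeWF_wellFounded {𝒜 : Set (List ℕ)} (hcl : Closed 𝒜) (hwf : TreeWF 𝒜) :
    WellFounded (treeRel 𝒜) := by
  rw [RelEmbedding.wellFounded_iff_isEmpty]
  by_contra h
  rw [not_isEmpty_iff] at h
  obtain ⟨f⟩ := h
  have hdesc : ∀ n : ℕ, treeRel 𝒜 (f (n + 1)) (f n) := fun n => f.map_rel_iff.2 (Nat.lt_succ_self n)
  exact hwf (chain_to_branch hcl f (fun m => (hdesc m).1)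
    (fun m => ⟨(hdesc m).2.2.1, (hdesc m).2.2.2⟩))

lemma wellFounded_treeWF {𝒜 : Set (List ℕ)} (hwf : WellFounded (treeRel 𝒜)) :
    TreeWF 𝒜 := by
  rintro ⟨J, hJ⟩
  have : ∀ n : ℕ, treeRel 𝒜 (seg J (n + 1)) (seg J n) := by
    intro n
    refine ⟨hJ n, hJ (n + 1), seg_prefix J (Nat.le_succ n), ?_⟩
    intro h
    have := congrArg List.length h
    simp at this
  exact (RelEmbedding.natGT (fun n => seg J n) this).not_wellFounded hwf


/-- rank of a node -/
noncomputable def rnk {𝒜 : Set (List ℕ)} (h : WellFounded (treeRel 𝒜)) (s : List ℕ) : Ordinal :=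
  (h.apply s).rank

lemma rnk_lt_of_rel {𝒜 : Set (List ℕ)} (h : WellFounded (treeRel 𝒜)) {s t : List ℕ}
    (hr : treeRel 𝒜 t s) : rnk h t < rnk h s :=
  Acc.rank_lt_of_rel _ hr

lemma exists_child_of_lt_rnk {𝒜 : Set (List ℕ)} (hcl : Closed 𝒜)
    (h : WellFounded (treeRel 𝒜)) {u : List ℕ} {γ : Ordinal} (hγ : γ < rnk h u) :
    u ∈ 𝒜 ∧ ∃ n : ℕ, u ++ [n] ∈ 𝒜 ∧ γ ≤ rnk h (u ++ [n]) := by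
  rw [rnk, Acc.rank_eq] at hγ
  rw [Ordinal.lt_iSup_iff] at hγ
  obtain ⟨⟨t, ht⟩, hlt⟩ := hγ
  rw [Order.lt_succ_iff] at hlt
  obtain ⟨hu𝒜, ht𝒜, hut, hune⟩ := ht
  refine ⟨hu𝒜, t.getD u.length 0, ?_, ?_⟩
  · exact hcl _ _ (snoc_prefix hut (prefix_length_lt hut hune)) ht𝒜
  · have hle : rnk h t ≤ rnk h (u ++ [t.getD u.length 0]) := by
      rcases eq_or_ne (u ++ [t.getD u.length 0]) t with h' | h'
      · rw [h']
      · exact le_of_lt (rnk_lt_of_rel h ⟨hcl _ _ (snoc_prefix hut (prefix_length_lt hut hune)) ht𝒜,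
          ht𝒜, snoc_prefix hut (prefix_length_lt hut hune), fun hh => h' hh⟩)
  
    exact le_trans (le_of_eq rfl) (le_trans hlt hle)

/-- the rank of any node is countable -/
lemma rnk_lt_omega1 {𝒜 : Set (List ℕ)} (h : WellFounded (treeRel 𝒜)) (s : List ℕ) :
    rnk h s < (Cardinal.aleph 1).ord := by
  rw [Cardinal.lt_ord]
  classical
  set R : List ℕ → Ordinal := fun t => if ht : Acc (treeRel 𝒜) t then ht.rank else 0 with hRdef
  have hR : ∀ (t : List ℕ) (ht : Acc (treeRel 𝒜) t), R t = ht.rank := fun t ht => dif_pos ht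
  have key : ∀ β : Set.Iio (rnk h s), ∃ t : List ℕ, ∃ ht : Acc (treeRel 𝒜) t, ht.rank = β.1 :=
    fun β => Acc.mem_range_rank_of_le (h.apply s) (le_of_lt β.2)
  choose f hf using key
  have hfinj : Function.Injective fun β => (ULift.up.{1} (f β) : ULift (List ℕ)) := by
    intro β γ hβγ
    have hβγ' : f β = f γ := congrArg ULift.down hβγ
    obtain ⟨hb, hb'⟩ := hf β
    obtain ⟨hc, hc'⟩ := hf γ
    apply Subtype.ext
    rw [← hb', ← hc', ← hR _ hb, ← hR _ hc, hβγ']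
  have hle := Cardinal.mk_le_of_injective hfinj
  rw [Cardinal.mk_uLift, Ordinal.mk_Iio_ordinal, Cardinal.mk_list_eq_aleph0] at hle
  rw [Cardinal.lift_le] at hle
  exact lt_of_le_of_lt hle Cardinal.aleph0_lt_aleph_one


variable {P : Type*}

/-- The transfinite hierarchy: `x ∈ M ψ α s` says roughly "the rank of `s` in `ψ x` is `≤ α`." -/
def M (ψ : P → Set (List ℕ)) (α : Ordinal) (s : List ℕ) : Set P :=
  {x | s ∈ ψ x → ∀ n : ℕ, s ++ [n] ∈ ψ x →
    ∃ β : Ordinal, ∃ _ : β < α, x ∈ M ψ β (s ++ [n])}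
termination_by α
decreasing_by exact ‹_›

lemma mem_M_iff (ψ : P → Set (List ℕ)) (α : Ordinal) (s : List ℕ) (x : P) :
    x ∈ M ψ α s ↔ (s ∈ ψ x → ∀ n : ℕ, s ++ [n] ∈ ψ x →
      ∃ β : Ordinal, β < α ∧ x ∈ M ψ β (s ++ [n])) := by
  rw [M]
  constructor
  · intro h hs n hn
    obtain ⟨β, hβ, hM⟩ := h hs n hn
    exact ⟨β, hβ, hM⟩
  · intro h hs n hn
    obtain ⟨β, hβ, hM⟩ := h hs n hn
    exact ⟨β, hβ, hM⟩

lemma M_measurable [MeasurableSpace P] (ψ : P → Set (List ℕ))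
    (hborel : ∀ s : List ℕ, MeasurableSet {x : P | s ∈ ψ x}) :
    ∀ α : Ordinal, α.card ≤ Cardinal.aleph0 → ∀ s : List ℕ, MeasurableSet (M ψ α s) := by
  intro α
  induction α using Ordinal.induction with
  | h α IH =>
    intro hα s
    have : M ψ α s = {x | s ∈ ψ x}ᶜ ∪
        ⋂ n : ℕ, ({x | s ++ [n] ∈ ψ x}ᶜ ∪ ⋃ β ∈ Set.Iio α, M ψ β (s ++ [n])) := by
      ext x
      rw [mem_M_iff]
      simp only [Set.mem_union, Set.mem_compl_iff, Set.mem_setOf_eq, Set.mem_iInter,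
        Set.mem_iUnion, Set.mem_Iio]
      constructor
      · intro h
        by_cases hs : s ∈ ψ x
        · refine Or.inr fun n => ?_
          by_cases hn : s ++ [n] ∈ ψ x
          · obtain ⟨β, hβ, hM⟩ := h hs n hn
            exact Or.inr ⟨β, hβ, hM⟩
          · exact Or.inl hn
        · exact Or.inl hs
      · rintro (h | h)
        · intro hs; exact absurd hs h
        · intro _ n hn
          rcases h n with h' | ⟨β, hβ, hM⟩
          · exact absurd hn h'
          · exact ⟨β, hβ, hM⟩
    rw [this]
    have hcnt : (Set.Iio α).Countable := by
      rw [← Set.countable_coe_iff, ← Cardinal.mk_le_aleph0_iff, Ordinal.mk_Iio_ordinal]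
      rw [Cardinal.lift_le_aleph0]; exact hα
    refine ((hborel s).compl).union (MeasurableSet.iInter fun n => ((hborel _).compl).union ?_)
    exact MeasurableSet.biUnion hcnt fun β hβ =>
      IH β hβ ((Ordinal.card_le_card hβ.le).trans hα) _

/-- membership in some `M α s` implies accessibility of all extensions of `s` -/
lemma M_acc (ψ : P → Set (List ℕ)) (htree : ∀ x : P, Closed (ψ x)) {x : P} :
    ∀ α : Ordinal, ∀ s : List ℕ, x ∈ M ψ α s →
      ∀ t : List ℕ, s <+: t → Acc (treeRel (ψ x)) t := by
  intro α
  induction α using Ordinal.induction with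
  | h α IH =>
    intro s hM t hst
    constructor
    intro u hu
    obtain ⟨ht𝒜, hu𝒜, htu, htune⟩ := hu
    by_cases hs : s ∈ ψ x
    · have hsu : s <+: u := hst.trans htu
      have hlt : s.length < u.length :=
        lt_of_le_of_lt hst.length_le (prefix_length_lt htu htune)
      have hchild : s ++ [u.getD s.length 0] <+: u := snoc_prefix hsu hlt
      have hchild𝒜 : s ++ [u.getD s.length 0] ∈ ψ x := htree x _ _ hchild hu𝒜
      obtain ⟨β, hβ, hMβ⟩ := (mem_M_iff ψ α s x).1 hM hs _ hchild𝒜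
      exact IH β hβ _ hMβ u hchild
    · exact absurd (htree x _ _ (hst.trans htu) hu𝒜) hs

/-- conversely, a rank bound implies membership in `M` -/
lemma rank_le_mem_M (ψ : P → Set (List ℕ)) {x : P} (hwf : WellFounded (treeRel (ψ x))) :
    ∀ α : Ordinal, ∀ s : List ℕ, rnk hwf s ≤ α → x ∈ M ψ α s := by
  intro α
  induction α using Ordinal.induction with
  | h α IH =>
    intro s hrk
    rw [mem_M_iff]
    intro hs n hn
    have hrel : treeRel (ψ x) (s ++ [n]) s := by
      refine ⟨hs, hn, ⟨[n], rfl⟩, fun h => ?_⟩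
      have := congrArg List.length h
      simp at this
    have hlt : rnk hwf (s ++ [n]) < α := lt_of_lt_of_le (rnk_lt_of_rel hwf hrel) hrk
    exact ⟨rnk hwf (s ++ [n]), hlt, IH _ hlt _ le_rfl⟩


/-- Existence of a monotone (strict-prefix-preserving) map between trees when ranks compare. -/
lemma exists_mono_map {𝒜 ℬ : Set (List ℕ)} (hclA : Closed 𝒜) (hclB : Closed ℬ)
    (hwfA : WellFounded (treeRel 𝒜)) (hwfB : WellFounded (treeRel ℬ))
    (hB0 : [] ∈ ℬ) (h0 : rnk hwfA [] ≤ rnk hwfB []) :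
    ∃ f : List ℕ → List ℕ, ∀ s t : List ℕ, s ∈ 𝒜 → t ∈ 𝒜 → s <+: t → s ≠ t →
      f s ∈ ℬ ∧ f t ∈ ℬ ∧ f s <+: f t ∧ f s ≠ f t := by
  classical
  let f : List ℕ → List ℕ := fun s =>
    s.reverseRecOn [] (fun l a prev =>
      if h : ∃ m : ℕ, prev ++ [m] ∈ ℬ ∧ rnk hwfA (l ++ [a]) ≤ rnk hwfB (prev ++ [m]) then
        prev ++ [Classical.choose h]
      else prev ++ [0])
  have hf_nil : f [] = [] := by simp [f]
  have hf_concat : ∀ (l : List ℕ) (a : ℕ), ∃ m : ℕ, f (l ++ [a]) = f l ++ [m] := by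
    intro l a
    rw [show f (l ++ [a]) = _ from List.reverseRecOn_concat _ _ _ _]
    split
    · exact ⟨_, rfl⟩
    · exact ⟨0, rfl⟩
  have hf_len : ∀ s : List ℕ, (f s).length = s.length := by
    intro s
    induction s using List.reverseRecOn with
    | nil => simp [hf_nil]
    | append_singleton l a ih =>
      obtain ⟨m, hm⟩ := hf_concat l a
      simp [hm, ih]
  have hf_inv : ∀ s : List ℕ, s ∈ 𝒜 → f s ∈ ℬ ∧ rnk hwfA s ≤ rnk hwfB (f s) := by
    intro s
    induction s using List.reverseRecOn with
    | nil => intro _; rw [hf_nil]; exact ⟨hB0, h0⟩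
    | append_singleton l a ih =>
      intro hla
      have hl : l ∈ 𝒜 := hclA _ _ ⟨[a], rfl⟩ hla
      obtain ⟨hflB, hrk⟩ := ih hl
      have hrel : treeRel 𝒜 (l ++ [a]) l := by
        refine ⟨hl, hla, ⟨[a], rfl⟩, fun h => ?_⟩
        have := congrArg List.length h; simp at this
      have hlt : rnk hwfA (l ++ [a]) < rnk hwfB (f l) :=
        lt_of_lt_of_le (rnk_lt_of_rel hwfA hrel) hrk
      obtain ⟨_, n, hn, hnrk⟩ := exists_child_of_lt_rnk hclB hwfB hlt
      have hex : ∃ m : ℕ, f l ++ [m] ∈ ℬ ∧ rnk hwfA (l ++ [a]) ≤ rnk hwfB (f l ++ [m]) :=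
        ⟨n, hn, hnrk⟩
      have : f (l ++ [a]) = f l ++ [Classical.choose hex] := by
        rw [show f (l ++ [a]) = _ from List.reverseRecOn_concat _ _ _ _]
        rw [dif_pos hex]
      rw [this]
      exact ⟨(Classical.choose_spec hex).1, (Classical.choose_spec hex).2⟩
  have hf_pre : ∀ t s : List ℕ, s <+: t → f s <+: f t := by
    intro t
    induction t using List.reverseRecOn with
    | nil => intro s hs; rw [List.prefix_nil.1 hs]
    | append_singleton l a ih =>
      intro s hs
      rcases List.prefix_concat_iff.1 hs with h | h
      · rw [h]
      · obtain ⟨m, hm⟩ := hf_concat l a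
        exact (ih s h).trans (by rw [hm]; exact ⟨[m], rfl⟩)
  refine ⟨f, fun s t hs ht hst hne => ?_⟩
  refine ⟨(hf_inv s hs).1, (hf_inv t ht).1, hf_pre t s hst, fun h => ?_⟩
  have h1 := congrArg List.length h
  rw [hf_len, hf_len] at h1
  exact absurd h1 (Nat.ne_of_lt (prefix_length_lt hst hne))


abbrev 𝒩 := ℕ → ℕ

instance : PolishSpace (𝒩 × 𝒩) := inferInstance
instance : PolishSpace (𝒩 × 𝒩 × 𝒩) := inferInstance

lemma ev_eq_of_continuous_discrete {X Y : Type*} [TopologicalSpace X] [TopologicalSpace Y]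
    [DiscreteTopology Y] {f : X → Y} (hf : Continuous f) (x₀ : X) :
    ∀ᶠ x in 𝓝 x₀, f x = f x₀ := by
  have h1 : f ⁻¹' {f x₀} ∈ 𝓝 x₀ := hf.continuousAt (IsOpen.mem_nhds (isOpen_discrete _) rfl)
  exact Filter.eventually_of_mem h1 fun x hx => hx

lemma continuous_of_locally_const {X Y : Type*} [TopologicalSpace X] [TopologicalSpace Y]
    {F : X → Y} (h : ∀ x₀ : X, ∀ᶠ x in 𝓝 x₀, F x = F x₀) : Continuous F := by
  rw [continuous_iff_continuousAt]
  intro x₀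
  exact tendsto_nhds_of_eventually_eq (h x₀)

/-- The key continuity lemma: approximate preimages converge. -/
lemma key_range {g : 𝒩 → 𝒩} (hg : Continuous g) (x : 𝒩) :
    (∃ z : 𝒩, ∀ m : ℕ, ∃ z' : 𝒩, (∀ i < m, z' i = z i) ∧ (∀ i < m, g z' i = x i)) ↔
      x ∈ Set.range g := by
  constructor
  · rintro ⟨z, hz⟩
    choose z' hz1 hz2 using hz
    have hz'tendsto : Tendsto z' atTop (𝓝 z) := by
      rw [tendsto_pi_nhds]
      intro i
      apply tendsto_nhds_of_eventually_eq
      filter_upwards [eventually_ge_atTop (i + 1)] with m hm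
      exact hz1 m i hm
    have h1 : Tendsto (fun m => g (z' m)) atTop (𝓝 (g z)) :=
      (hg.tendsto z).comp hz'tendsto
    refine ⟨z, ?_⟩
    funext i
    have h2 : Tendsto (fun m => g (z' m) i) atTop (𝓝 (g z i)) :=
      (tendsto_pi_nhds.1 h1) i
    have h3 : Tendsto (fun m => g (z' m) i) atTop (𝓝 (x i)) := by
      apply tendsto_nhds_of_eventually_eq
      filter_upwards [eventually_ge_atTop (i + 1)] with m hm
      exact hz2 m i hm
    exact tendsto_nhds_unique h2 h3
  · rintro ⟨z, rfl⟩
    exact ⟨z, fun m => ⟨z, fun i _ => rfl, fun i _ => rfl⟩⟩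

/-- encoding of pairs of lists -/
noncomputable def enc2 : List ℕ × List ℕ → ℕ := Encodable.encode

/-- The universal analytic set. -/
def Utilde (S : 𝒩 → Set (List ℕ × List ℕ)) : Set (𝒩 × 𝒩 × 𝒩) :=
  {w | ∀ m : ℕ, (seg w.2.2 m, seg w.2.1 m) ∈ S w.1}

noncomputable def SofCode (y : 𝒩) : Set (List ℕ × List ℕ) := {p | y (enc2 p) = 0}

def UnivSet : Set (𝒩 × 𝒩) := (fun w : 𝒩 × 𝒩 × 𝒩 => (w.1, w.2.1)) '' Utilde SofCode

lemma isClosed_Utilde : IsClosed (Utilde SofCode) := by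
  have : Utilde SofCode = ⋂ m : ℕ, {w : 𝒩 × 𝒩 × 𝒩 | w.1 (enc2 (seg w.2.2 m, seg w.2.1 m)) = 0} := by
    ext w; simp [Utilde, SofCode]
  rw [this]
  refine isClosed_iInter fun m => ?_
  have hcont : Continuous fun w : 𝒩 × 𝒩 × 𝒩 => w.1 (enc2 (seg w.2.2 m, seg w.2.1 m)) := by
    apply continuous_of_locally_const
    intro w₀
    have hseg2 : ∀ᶠ w : 𝒩 × 𝒩 × 𝒩 in 𝓝 w₀, seg w.2.2 m = seg w₀.2.2 m := by
      have : ∀ᶠ w : 𝒩 × 𝒩 × 𝒩 in 𝓝 w₀, ∀ i ∈ Finset.range m, w.2.2 i = w₀.2.2 i := by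
        rw [eventually_all_finset]
        intro i _
        have hc : Continuous fun w : 𝒩 × 𝒩 × 𝒩 => w.2.2 i :=
          (continuous_apply i).comp (continuous_snd.comp continuous_snd)
        exact ev_eq_of_continuous_discrete hc w₀
      filter_upwards [this] with w hw
      simp only [seg, List.map_inj_left]
      intro i hi
      exact hw i (by simpa using List.mem_range.1 hi)
    have hseg1 : ∀ᶠ w : 𝒩 × 𝒩 × 𝒩 in 𝓝 w₀, seg w.2.1 m = seg w₀.2.1 m := by
      have : ∀ᶠ w : 𝒩 × 𝒩 × 𝒩 in 𝓝 w₀, ∀ i ∈ Finset.range m, w.2.1 i = w₀.2.1 i := by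
        rw [eventually_all_finset]
        intro i _
        have hc : Continuous fun w : 𝒩 × 𝒩 × 𝒩 => w.2.1 i :=
          (continuous_apply i).comp (continuous_fst.comp continuous_snd)
        exact ev_eq_of_continuous_discrete hc w₀
      filter_upwards [this] with w hw
      simp only [seg, List.map_inj_left]
      intro i hi
      exact hw i (by simpa using List.mem_range.1 hi)
    have heval : ∀ᶠ w : 𝒩 × 𝒩 × 𝒩 in 𝓝 w₀,
        w.1 (enc2 (seg w₀.2.2 m, seg w₀.2.1 m)) = w₀.1 (enc2 (seg w₀.2.2 m, seg w₀.2.1 m)) := by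
      have hc : Continuous fun w : 𝒩 × 𝒩 × 𝒩 => w.1 (enc2 (seg w₀.2.2 m, seg w₀.2.1 m)) :=
        (continuous_apply _).comp continuous_fst
      exact ev_eq_of_continuous_discrete hc w₀
    filter_upwards [hseg2, hseg1, heval] with w h2 h1 he
    rw [h2, h1, he]
  exact isClosed_eq hcont continuous_const

lemma analyticSet_UnivSet : AnalyticSet UnivSet :=
  (isClosed_Utilde.analyticSet).image_of_continuous
    (continuous_fst.prodMk (continuous_fst.comp continuous_snd))

lemma mem_UnivSet (y x : 𝒩) :
    (y, x) ∈ UnivSet ↔ ∃ z : 𝒩, ∀ m : ℕ, y (enc2 (seg z m, seg x m)) = 0 := by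
  constructor
  · rintro ⟨⟨y', x', z⟩, hw, heq⟩
    injection heq with h1 h2
    subst h1; subst h2
    exact ⟨z, hw⟩
  · rintro ⟨z, hz⟩
    exact ⟨(y, x, z), hz, rfl⟩

open Classical in
lemma exists_code {A : Set 𝒩} (hA : AnalyticSet A) :
    ∃ y : 𝒩, ∀ x : 𝒩, ((y, x) ∈ UnivSet ↔ x ∈ A) := by
  rw [AnalyticSet_def] at hA
  rcases hA with rfl | ⟨g, hg, rfl⟩
  · refine ⟨fun _ => 1, fun x => ?_⟩
    simp only [Set.mem_empty_iff_false, iff_false, mem_UnivSet]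
    rintro ⟨z, hz⟩
    exact one_ne_zero (hz 0)
  · set S : Set (List ℕ × List ℕ) :=
      {p | ∃ z' : 𝒩, (∀ i < p.1.length, z' i = p.1.getD i 0) ∧
        (∀ i < p.1.length, g z' i = p.2.getD i 0)} with hS
    set y : 𝒩 := fun k =>
      if (Encodable.decode (α := List ℕ × List ℕ) k).elim False (· ∈ S) then 0 else 1 with hy
    have hcode : ∀ p : List ℕ × List ℕ, (y (enc2 p) = 0 ↔ p ∈ S) := by
      intro p
      show (if (Encodable.decode (α := List ℕ × List ℕ) (Encodable.encode p)).elim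
          False (· ∈ S) then (0 : ℕ) else 1) = 0 ↔ p ∈ S
      rw [Encodable.encodek]
      by_cases hp : p ∈ S <;> simp [hp]
    refine ⟨y, fun x => ?_⟩
    rw [mem_UnivSet, ← key_range hg x]
    constructor
    · rintro ⟨z, hz⟩
      refine ⟨z, fun m => ?_⟩
      have := (hcode _).1 (hz m)
      rw [hS] at this
      obtain ⟨z', h1, h2⟩ := this
      rw [seg_length] at h1 h2
      refine ⟨z', fun i hi => ?_, fun i hi => ?_⟩
      · rw [h1 i hi, seg_getD z hi]
      · rw [h2 i hi, seg_getD x hi]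
    · rintro ⟨z, hz⟩
      refine ⟨z, fun m => ?_⟩
      obtain ⟨z', h1, h2⟩ := hz m
      refine (hcode _).2 ?_
      rw [hS]
      refine ⟨z', fun i hi => ?_, fun i hi => ?_⟩
      · rw [seg_length] at hi
        rw [seg_getD z hi]; exact h1 i hi
      · rw [seg_length] at hi
        rw [seg_getD x hi]; exact h2 i hi

def Diag : Set 𝒩 := {x | (x, x) ∉ UnivSet}

lemma not_analyticSet_Diag : ¬ AnalyticSet Diag := by
  intro h
  obtain ⟨y, hy⟩ := exists_code h
  have := hy y
  simp only [Diag, Set.mem_setOf_eq] at this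
  tauto

lemma analyticSet_compl_Diag : AnalyticSet Diagᶜ := by
  have : Diagᶜ = (fun x : 𝒩 => (x, x)) ⁻¹' UnivSet := by
    ext x; simp [Diag]
  rw [this]
  exact analyticSet_UnivSet.preimage (continuous_id.prodMk continuous_id)


/-- The reduction tree. -/
def Ttree (g : 𝒩 → 𝒩) (x : 𝒩) : Set (List ℕ) :=
  {s | ∃ z : 𝒩, (∀ i < s.length, z i = s.getD i 0) ∧ (∀ i < s.length, g z i = x i)}

lemma Ttree_closed (g : 𝒩 → 𝒩) (x : 𝒩) : Closed (Ttree g x) := by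
  rintro s t hst ⟨z, hz1, hz2⟩
  refine ⟨z, fun i hi => ?_, fun i hi => hz2 i (lt_of_lt_of_le hi hst.length_le)⟩
  rw [hz1 i (lt_of_lt_of_le hi hst.length_le)]
  exact (prefix_getD hst hi).symm

lemma TreeWF_Ttree_iff {g : 𝒩 → 𝒩} (hg : Continuous g) (x : 𝒩) :
    TreeWF (Ttree g x) ↔ x ∉ Set.range g := by
  rw [TreeWF, not_iff_not, ← key_range hg x]
  constructor
  · rintro ⟨J, hJ⟩
    refine ⟨J, fun m => ?_⟩
    obtain ⟨z', hz1, hz2⟩ := hJ m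
    simp only [List.length_map, List.length_range] at hz1 hz2
    refine ⟨z', fun i hi => ?_, fun i hi => hz2 i hi⟩
    exact (hz1 i hi).trans (seg_getD J hi)
  · rintro ⟨z, hz⟩
    refine ⟨z, fun m => ?_⟩
    obtain ⟨z', hz1, hz2⟩ := hz m
    refine ⟨z', ?_, ?_⟩
    · simp only [List.length_map, List.length_range]
      intro i hi
      exact (hz1 i hi).trans (seg_getD z hi).symm
    · simp only [List.length_map, List.length_range]
      exact hz2

lemma isOpen_Ttree_sec (g : 𝒩 → 𝒩) (s : List ℕ) : IsOpen {x : 𝒩 | s ∈ Ttree g x} := by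
  have heq : {x : 𝒩 | s ∈ Ttree g x} =
      ⋃ z : 𝒩, ⋃ _ : (∀ i < s.length, z i = s.getD i 0),
        {x : 𝒩 | ∀ i ∈ Finset.range s.length, x i = g z i} := by
    ext x
    simp only [Set.mem_setOf_eq, Set.mem_iUnion, Finset.mem_range]
    constructor
    · rintro ⟨z, hz1, hz2⟩
      exact ⟨z, hz1, fun i hi => (hz2 i hi).symm⟩
    · rintro ⟨z, hz1, hz2⟩
      exact ⟨z, hz1, fun i hi => (hz2 i hi).symm⟩
  rw [heq]
  refine isOpen_iUnion fun z => isOpen_iUnion fun _ => ?_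
  have : {x : 𝒩 | ∀ i ∈ Finset.range s.length, x i = g z i} =
      ⋂ i ∈ Finset.range s.length, (fun x : 𝒩 => x i) ⁻¹' {g z i} := by
    ext x; simp
  rw [this]
  exact isOpen_biInter_finset fun i _ => (continuous_apply i).isOpen_preimage _ (isOpen_discrete _)

end Stmt11Aux


/-- If `ψ` maps a Polish space into trees on `ℕ` and each `{x | s ∈ ψ x}` is Borel, then
`C = {x | ψ x is well-founded}` is Borel iff the heights `h(ψ x)`, `x ∈ C`, are bounded by
a countable ordinal. -/
theorem stmt_11 (P : Type*) [TopologicalSpace P] [PolishSpace P]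
    [MeasurableSpace P] [BorelSpace P]
    (ψ : P → Set (List ℕ))
    (htree : ∀ x : P, ∀ s t : List ℕ, s <+: t → t ∈ ψ x → s ∈ ψ x)
    (hborel : ∀ s : List ℕ, MeasurableSet {x : P | s ∈ ψ x}) :
    MeasurableSet {x : P | TreeWF (ψ x)} ↔
      ∃ α : Ordinal, α < (Cardinal.aleph 1).ord ∧
        ∀ x : P, TreeWF (ψ x) → treeHeight (ψ x) ≤ α := by
  classical
  open Stmt11Aux in
  have treeHeight_eq : ∀ (𝒜 : Set (List ℕ)) (h : WellFounded (treeRel 𝒜)),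
      treeHeight 𝒜 = rnk h [] := by
    intro 𝒜 h
    rw [treeHeight, dif_pos h]
    rfl
  constructor
  · -- Borel implies bounded
    intro hC
    by_contra hcon
    push_neg at hcon
    -- extract a continuous map with range the complement of the diagonal set
    have hcompl := Stmt11Aux.analyticSet_compl_Diag
    rw [MeasureTheory.AnalyticSet_def] at hcompl
    rcases hcompl with hemp | ⟨g, hg, hrange⟩
    · apply Stmt11Aux.not_analyticSet_Diag
      have : Stmt11Aux.Diag = Set.univ := by
        rw [← Set.compl_empty, ← hemp, compl_compl]
      rw [this, MeasureTheory.AnalyticSet_def]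
      exact Or.inr ⟨id, continuous_id, Set.range_id⟩
    · set T : Stmt11Aux.𝒩 → Set (List ℕ) := Stmt11Aux.Ttree g with hT
      have hDiag : ∀ x : Stmt11Aux.𝒩, x ∈ Stmt11Aux.Diag ↔ TreeWF (T x) := by
        intro x
        rw [hT, Stmt11Aux.TreeWF_Ttree_iff hg, hrange]
        simp [Stmt11Aux.Diag]
      set dec : ℕ → List ℕ := fun n => ((Encodable.decode n : Option (List ℕ))).getD [] with hdec
      have hdecenc : ∀ s : List ℕ, dec (Encodable.encode s) = s := by
        intro s; rw [hdec]; simp [Encodable.encodek]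
      set E : Set (Stmt11Aux.𝒩 × P × Stmt11Aux.𝒩) :=
        {w | TreeWF (ψ w.2.1) ∧ ∀ s t : List ℕ, s ∈ T w.1 → t ∈ T w.1 → s <+: t → s ≠ t →
          (dec (w.2.2 (Encodable.encode s)) ∈ ψ w.2.1 ∧
           dec (w.2.2 (Encodable.encode t)) ∈ ψ w.2.1 ∧
           dec (w.2.2 (Encodable.encode s)) <+: dec (w.2.2 (Encodable.encode t)) ∧
           dec (w.2.2 (Encodable.encode s)) ≠ dec (w.2.2 (Encodable.encode t)))} with hE
      have hEmeas : MeasurableSet E := by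
        have hEeq : E = ((fun w : Stmt11Aux.𝒩 × P × Stmt11Aux.𝒩 => w.2.1) ⁻¹'
            {x' : P | TreeWF (ψ x')}) ∩
            ⋂ p : List ℕ × List ℕ, {w : Stmt11Aux.𝒩 × P × Stmt11Aux.𝒩 |
              p.1 ∈ T w.1 → p.2 ∈ T w.1 → p.1 <+: p.2 → p.1 ≠ p.2 →
              (dec (w.2.2 (Encodable.encode p.1)) ∈ ψ w.2.1 ∧
               dec (w.2.2 (Encodable.encode p.2)) ∈ ψ w.2.1 ∧
               dec (w.2.2 (Encodable.encode p.1)) <+: dec (w.2.2 (Encodable.encode p.2)) ∧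
               dec (w.2.2 (Encodable.encode p.1)) ≠ dec (w.2.2 (Encodable.encode p.2)))} := by
          ext w
          simp only [hE, Set.mem_setOf_eq, Set.mem_inter_iff, Set.mem_preimage, Set.mem_iInter,
            Prod.forall]
        rw [hEeq]
        refine MeasurableSet.inter ((measurable_fst.comp measurable_snd) hC) ?_
        refine MeasurableSet.iInter fun p => ?_
        by_cases hpre : p.1 <+: p.2 ∧ p.1 ≠ p.2
        · have heq2 : {w : Stmt11Aux.𝒩 × P × Stmt11Aux.𝒩 |
              p.1 ∈ T w.1 → p.2 ∈ T w.1 → p.1 <+: p.2 → p.1 ≠ p.2 →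
              (dec (w.2.2 (Encodable.encode p.1)) ∈ ψ w.2.1 ∧
               dec (w.2.2 (Encodable.encode p.2)) ∈ ψ w.2.1 ∧
               dec (w.2.2 (Encodable.encode p.1)) <+: dec (w.2.2 (Encodable.encode p.2)) ∧
               dec (w.2.2 (Encodable.encode p.1)) ≠ dec (w.2.2 (Encodable.encode p.2)))} =
              ((fun w : Stmt11Aux.𝒩 × P × Stmt11Aux.𝒩 => w.1) ⁻¹' {x | p.1 ∈ T x})ᶜ ∪
              ((fun w : Stmt11Aux.𝒩 × P × Stmt11Aux.𝒩 => w.1) ⁻¹' {x | p.2 ∈ T x})ᶜ ∪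
              ⋃ q : List ℕ × List ℕ,
                (((fun w : Stmt11Aux.𝒩 × P × Stmt11Aux.𝒩 => w.2.2 (Encodable.encode p.1)) ⁻¹'
                    (dec ⁻¹' {q.1})) ∩
                 ((fun w : Stmt11Aux.𝒩 × P × Stmt11Aux.𝒩 => w.2.2 (Encodable.encode p.2)) ⁻¹'
                    (dec ⁻¹' {q.2})) ∩
                 ((fun w : Stmt11Aux.𝒩 × P × Stmt11Aux.𝒩 => w.2.1) ⁻¹'
                    {x' : P | q.1 ∈ ψ x' ∧ q.2 ∈ ψ x' ∧ q.1 <+: q.2 ∧ q.1 ≠ q.2})) := by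
            ext w
            simp only [Set.mem_setOf_eq, Set.mem_union, Set.mem_compl_iff, Set.mem_preimage,
              Set.mem_iUnion, Set.mem_inter_iff, Set.mem_singleton_iff]
            constructor
            · intro h
              by_cases h1 : p.1 ∈ T w.1
              · by_cases h2 : p.2 ∈ T w.1
                · obtain ⟨ha, hb, hc, hd⟩ := h h1 h2 hpre.1 hpre.2
                  exact Or.inr ⟨(dec (w.2.2 (Encodable.encode p.1)),
                    dec (w.2.2 (Encodable.encode p.2))), ⟨rfl, rfl⟩, ha, hb, hc, hd⟩
                · exact Or.inl (Or.inr h2)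
              · exact Or.inl (Or.inl h1)
            · rintro (h | h) <;> intro h1 h2 _ _
              · tauto
              · obtain ⟨q, ⟨hq1, hq2⟩, hq3⟩ := h
                rw [hq1, hq2]
                exact hq3
          rw [heq2]
          refine (MeasurableSet.union (MeasurableSet.union ?_ ?_) ?_)
          · exact (measurable_fst ((Stmt11Aux.isOpen_Ttree_sec g p.1).measurableSet)).compl
          · exact (measurable_fst ((Stmt11Aux.isOpen_Ttree_sec g p.2).measurableSet)).compl
          · refine MeasurableSet.iUnion fun q => ?_
            refine MeasurableSet.inter (MeasurableSet.inter ?_ ?_) ?_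
            · exact ((measurable_pi_apply _).comp (measurable_snd.comp measurable_snd))
                (MeasurableSet.of_discrete)
            · exact ((measurable_pi_apply _).comp (measurable_snd.comp measurable_snd))
                (MeasurableSet.of_discrete)
            · by_cases hq : q.1 <+: q.2 ∧ q.1 ≠ q.2
              · have : {x' : P | q.1 ∈ ψ x' ∧ q.2 ∈ ψ x' ∧ q.1 <+: q.2 ∧ q.1 ≠ q.2} =
                    {x' : P | q.1 ∈ ψ x'} ∩ {x' : P | q.2 ∈ ψ x'} := by
                  ext x'; simp only [Set.mem_setOf_eq, Set.mem_inter_iff]; tauto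
                rw [this]
                exact (measurable_fst.comp measurable_snd)
                  ((hborel q.1).inter (hborel q.2))
              · have : {x' : P | q.1 ∈ ψ x' ∧ q.2 ∈ ψ x' ∧ q.1 <+: q.2 ∧ q.1 ≠ q.2} = ∅ := by
                  ext x'; simp only [Set.mem_setOf_eq, Set.mem_empty_iff_false, iff_false]
                  tauto
                rw [this]
                exact (measurable_fst.comp measurable_snd) MeasurableSet.empty
        · have : {w : Stmt11Aux.𝒩 × P × Stmt11Aux.𝒩 |
              p.1 ∈ T w.1 → p.2 ∈ T w.1 → p.1 <+: p.2 → p.1 ≠ p.2 →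
              (dec (w.2.2 (Encodable.encode p.1)) ∈ ψ w.2.1 ∧
               dec (w.2.2 (Encodable.encode p.2)) ∈ ψ w.2.1 ∧
               dec (w.2.2 (Encodable.encode p.1)) <+: dec (w.2.2 (Encodable.encode p.2)) ∧
               dec (w.2.2 (Encodable.encode p.1)) ≠ dec (w.2.2 (Encodable.encode p.2)))} =
              Set.univ := by
            ext w
            simp only [Set.mem_setOf_eq, Set.mem_univ, iff_true]
            intro _ _ h1 h2
            exact absurd ⟨h1, h2⟩ hpre
          rw [this]
          exact MeasurableSet.univ
      have hDE : Stmt11Aux.Diag = Prod.fst '' E := by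
        ext x
        constructor
        · intro hx
          have hwfA : WellFounded (treeRel (T x)) :=
            Stmt11Aux.treeWF_wellFounded (Stmt11Aux.Ttree_closed g x) ((hDiag x).1 hx)
          obtain ⟨x', hx'wf, hx'ht⟩ :=
            hcon (Stmt11Aux.rnk hwfA []) (Stmt11Aux.rnk_lt_omega1 hwfA [])
          have hwfB : WellFounded (treeRel (ψ x')) :=
            Stmt11Aux.treeWF_wellFounded (htree x') hx'wf
          rw [treeHeight_eq _ hwfB] at hx'ht
          have hpos : (0 : Ordinal) < Stmt11Aux.rnk hwfB [] :=
            lt_of_le_of_lt zero_le hx'ht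
          have hB0 : [] ∈ ψ x' :=
            (Stmt11Aux.exists_child_of_lt_rnk (htree x') hwfB hpos).1
          obtain ⟨f, hf⟩ := Stmt11Aux.exists_mono_map (Stmt11Aux.Ttree_closed g x) (htree x')
            hwfA hwfB hB0 (le_of_lt hx'ht)
          refine ⟨(x, x', fun k => Encodable.encode (f (dec k))), ⟨hx'wf, ?_⟩, rfl⟩
          intro s t hsT htT hst hne
          simp only [hdecenc]
          exact hf s t hsT htT hst hne
        · rintro ⟨⟨x1, x', F⟩, ⟨hx'C, hmono⟩, rfl⟩
          rw [hDiag]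
          intro hbranch
          obtain ⟨J, hJ⟩ := hbranch
          have hseg : ∀ m : ℕ, Stmt11Aux.seg J m ∈ T x1 := fun m => hJ m
          have hchain : ∀ m : ℕ, Stmt11Aux.seg J m <+: Stmt11Aux.seg J (m + 1) ∧
              Stmt11Aux.seg J m ≠ Stmt11Aux.seg J (m + 1) := by
            intro m
            refine ⟨Stmt11Aux.seg_prefix J (Nat.le_succ m), fun h => ?_⟩
            have := congrArg List.length h
            simp at this
          have hmono' := fun m => hmono (Stmt11Aux.seg J m) (Stmt11Aux.seg J (m + 1))
            (hseg m) (hseg (m + 1)) (hchain m).1 (hchain m).2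
          apply hx'C
          exact Stmt11Aux.chain_to_branch (htree x')
            (fun m => dec (F (Encodable.encode (Stmt11Aux.seg J m))))
            (fun m => (hmono' m).1)
            (fun m => ⟨(hmono' m).2.2.1, (hmono' m).2.2.2⟩)
      apply Stmt11Aux.not_analyticSet_Diag
      rw [hDE]
      exact hEmeas.analyticSet_image measurable_fst
  · -- bounded implies Borel
    rintro ⟨α, hα, hbd⟩
    have hCeq : {x : P | TreeWF (ψ x)} = Stmt11Aux.M ψ α [] := by
      ext x
      constructor
      · intro hx
        have hwf : WellFounded (treeRel (ψ x)) := Stmt11Aux.treeWF_wellFounded (htree x) hx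
        have hh : treeHeight (ψ x) = Stmt11Aux.rnk hwf [] := treeHeight_eq _ hwf
        exact Stmt11Aux.rank_le_mem_M ψ hwf α [] (by rw [← hh]; exact hbd x hx)
      · intro hx
        have hacc : ∀ t : List ℕ, Acc (treeRel (ψ x)) t := fun t =>
          Stmt11Aux.M_acc ψ htree α [] hx t List.nil_prefix
        exact Stmt11Aux.wellFounded_treeWF ⟨hacc⟩
    rw [hCeq]
    refine Stmt11Aux.M_measurable ψ hborel α ?_ []
    rw [Cardinal.lt_ord] at hα
    have := Cardinal.succ_aleph0
    rw [← this, Order.lt_succ_iff] at hα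
    exact hα
end

section
/- Let X be a separable Banach space. There exists a countable ordinal α such that for every uniformly ergodic operator T on X and every ε > 0, the tree 𝒜_e(T,ε) is well-founded and its height satisfies h(𝒜_e(T,ε)) ≤ α. -/
open Filter Topology

/- ---------- auxiliary lemmas ---------- -/

/-- In a strictly increasing list of naturals, the `p`-th entry is at least `p`. -/
lemma chain'_le_getD {s : List ℕ} (hs : s.Chain' (· < ·)) :
    ∀ p, p < s.length → p ≤ s.getD p 0 := by
  intro p
  induction p with
  | zero => intro _; exact Nat.zero_le _
  | succ q ih =>
      intro hq
      have h1 : q < s.length := by omega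
      have h2 : q ≤ s.getD q 0 := ih h1
      have h3 : s.getD q 0 < s.getD (q + 1) 0 := by
        rw [List.getD_eq_getElem (hn := h1), List.getD_eq_getElem (hn := hq)]
        exact List.isChain_iff_getElem.mp hs q (by omega)
      omega

lemma ergoTree_length_le {X : Type*} [NormedAddCommGroup X] [NormedSpace ℝ X]
    {T : X →L[ℝ] X} {ε : ℝ} {N : ℕ}
    (hN : ∀ n, N ≤ n → ∀ m, N ≤ m → ‖cesaroMean T n - cesaroMean T m‖ ≤ ε)
    {s : List ℕ} (hs : s ∈ ergoTree T ε) : s.length ≤ N + 1 := by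
  by_contra hlen
  push_neg at hlen
  obtain ⟨hchain, hcond⟩ := hs
  rcases hcond with h1 | ⟨x, hx, hsep⟩
  · omega
  · have hNlt : N + 1 < s.length := hlen
    have hsep' := hsep N hNlt
    have hgN : N ≤ s.getD N 0 := chain'_le_getD hchain N (by omega)
    have hgN1 : N ≤ s.getD (N + 1) 0 := le_trans (by omega)
      (chain'_le_getD hchain (N + 1) (by omega))
    have hb : ‖cesaroMean T (s.getD N 0) x - cesaroMean T (s.getD (N + 1) 0) x‖ ≤ ε := by
      calc ‖cesaroMean T (s.getD N 0) x - cesaroMean T (s.getD (N + 1) 0) x‖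
          = ‖(cesaroMean T (s.getD N 0) - cesaroMean T (s.getD (N + 1) 0)) x‖ := by
            simp [ContinuousLinearMap.sub_apply]
        _ ≤ ‖cesaroMean T (s.getD N 0) - cesaroMean T (s.getD (N + 1) 0)‖ * ‖x‖ :=
            ContinuousLinearMap.le_opNorm _ x
        _ ≤ ε * 1 := by
            apply mul_le_mul (hN _ hgN _ hgN1) hx (norm_nonneg x)
            exact le_trans (norm_nonneg _) (hN N le_rfl N le_rfl)
        _ = ε := mul_one ε
    exact absurd hsep' (not_lt.mpr hb)

lemma treeRel_length_lt {𝒜 : Set (List ℕ)} {t s : List ℕ} (h : treeRel 𝒜 t s) :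
    s.length < t.length := by
  obtain ⟨_, _, hpre, hne⟩ := h
  rcases lt_or_eq_of_le hpre.length_le with h' | h'
  · exact h'
  · exact absurd (List.IsPrefix.eq_of_length hpre h') hne

lemma treeRel_wf_of_length_bound {𝒜 : Set (List ℕ)} {L : ℕ}
    (hL : ∀ s ∈ 𝒜, s.length ≤ L) : WellFounded (treeRel 𝒜) := by
  have : Subrelation (treeRel 𝒜) (InvImage (· < ·) (fun s : List ℕ => L - s.length)) := by
    intro t s h
    have h1 := treeRel_length_lt h
    have h2 : t.length ≤ L := hL t h.2.1
    exact Nat.sub_lt_sub_left (by omega) h1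
  exact Subrelation.wf this (InvImage.wf _ Nat.lt_wfRel.wf)

lemma rank_le_of_length_bound {𝒜 : Set (List ℕ)} {L : ℕ}
    (hL : ∀ s ∈ 𝒜, s.length ≤ L) (h : WellFounded (treeRel 𝒜)) :
    ∀ s : List ℕ, ((h.apply s).rank : Ordinal) ≤ (L - s.length : ℕ) := by
  intro s
  induction s using h.induction with
  | _ s ih =>
    rw [Acc.rank_eq]
    apply Ordinal.iSup_le
    rintro ⟨t, ht⟩
    have h1 := treeRel_length_lt ht
    have h2 : t.length ≤ L := hL t ht.2.1
    have h3 : (L - t.length) + 1 ≤ L - s.length := by omega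
    calc Order.succ ((h.apply s).inv ht).rank
        ≤ Order.succ ((L - t.length : ℕ) : Ordinal) := by
          have := ih t ht
          have heq : ((h.apply s).inv ht).rank = (h.apply t).rank := rfl
          rw [heq]
          exact Order.succ_le_succ this
      _ = ((L - t.length : ℕ) : Ordinal) + 1 := by
          rw [Ordinal.add_one_eq_succ]
      _ = (((L - t.length) + 1 : ℕ) : Ordinal) := by
          push_cast; ring
      _ ≤ ((L - s.length : ℕ) : Ordinal) := by
          exact_mod_cast h3

/-- For a separable Banach space `X`, there is a countable ordinal `α` such that for every
uniformly ergodic `T` and every `ε > 0` the tree `𝒜_e(T, ε)` is well-founded with height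
at most `α`. -/
theorem stmt_12 (X : Type*) [NormedAddCommGroup X] [NormedSpace ℝ X] [CompleteSpace X]
    [TopologicalSpace.SeparableSpace X] :
    ∃ α : Ordinal, α < (Cardinal.aleph 1).ord ∧
      ∀ T : X →L[ℝ] X, IsUniformlyErgodicOp T → ∀ ε : ℝ, 0 < ε →
        TreeWF (ergoTree T ε) ∧ treeHeight (ergoTree T ε) ≤ α := by
  refine ⟨Ordinal.omega0, ?_, ?_⟩
  · rw [Cardinal.lt_ord]
    simpa using Cardinal.aleph0_lt_aleph_one
  · intro T hT ε hε
    -- get a Cauchy tail bound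
    obtain ⟨Lop, hLop⟩ := hT
    have hcau : CauchySeq (fun n => cesaroMean T n) := hLop.cauchySeq
    obtain ⟨N, hNc⟩ := Metric.cauchySeq_iff.mp hcau ε hε
    have hN : ∀ n, N ≤ n → ∀ m, N ≤ m → ‖cesaroMean T n - cesaroMean T m‖ ≤ ε := by
      intro n hn m hm
      have := hNc n hn m hm
      rw [dist_eq_norm] at this
      exact this.le
    have hL : ∀ s ∈ ergoTree T ε, s.length ≤ N + 1 := fun s hs =>
      ergoTree_length_le hN hs
    have hwf : WellFounded (treeRel (ergoTree T ε)) := treeRel_wf_of_length_bound hL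
    constructor
    · rintro ⟨J, hJ⟩
      have h1 := hL _ (hJ (N + 2))
      simp at h1
    · rw [treeHeight, dif_pos hwf]
      calc ((hwf.apply []).rank : Ordinal) ≤ ((N + 1 - ([] : List ℕ).length : ℕ) : Ordinal) :=
            rank_le_of_length_bound hL hwf []
        _ ≤ Ordinal.omega0 := (Ordinal.nat_lt_omega0 _).le
end
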